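/- arXiv:2501.13626 — 4 statements merged into one kernel-verified Lean document; each statement's English description precedes it below -/
import Mathlib

section
/- Let (a_n) be an arithmetic sequence and A ⊆ ℕ a set that is not b-bounded and satisfies d̄(L(A)) > 0. If d(L(A')) = 0 for every b-bounded subset A' of A, then there exists a b-divergent set B ⊆ A such that d(L(A \ B)) = 0. -/
open Filter Topology Set

noncomputable section

/-- The sequence of ratios `b n = a n / a (n-1)` of an arithmetic sequence. -/
def ratios (a : ℕ → ℕ) (n : ℕ) : ℕ := a n / a (n - 1)

/-- An arithmetic sequence: `a 0 = 1`, strictly increasing, each term divides the next. -/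
def IsArithSeq (a : ℕ → ℕ) : Prop :=
  a 0 = 1 ∧ (∀ n, a n < a (n + 1)) ∧ (∀ n, a n ∣ a (n + 1))

/-- The indices `n_k` with `a k = d (n k)`: `n 0 = 1`, `n (k+1) = n k + (b (k+1) - 1)`. -/
def nseq (a : ℕ → ℕ) : ℕ → ℕ
  | 0 => 1
  | k + 1 => nseq a k + (ratios a (k + 1) - 1)

/-- The lifting function `L(A) = ⋃_{k ∈ A} [n_{k-1}, n_k - 1]`. -/
def liftSet (a : ℕ → ℕ) (A : Set ℕ) : Set ℕ :=
  ⋃ k ∈ A, Set.Icc (nseq a (k - 1)) (nseq a k - 1)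

/-- `A ⊆ ℕ` has natural density `δ`. -/
def HasDensity (A : Set ℕ) (δ : ℝ) : Prop :=
  Tendsto (fun n : ℕ => ((A ∩ Set.Iio n).ncard : ℝ) / n) atTop (𝓝 δ)

/-- The upper natural density of `A ⊆ ℕ`. -/
def upperDensity (A : Set ℕ) : ℝ :=
  limsup (fun n : ℕ => ((A ∩ Set.Iio n).ncard : ℝ) / n) atTop

/-- The sequence `(d n)`: the increasing enumeration of `{r * a k : k ≥ 0, 1 ≤ r < b (k+1)}`. -/
def dSeq (a : ℕ → ℕ) : ℕ → ℕ :=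
  Nat.nth (fun m => ∃ k r : ℕ, 1 ≤ r ∧ r < ratios a (k + 1) ∧ m = r * a k)

/-- The characterized subgroup `t_{(u n)}(𝕋)`. -/
def charSub (u : ℕ → ℤ) : Set (AddCircle (1 : ℝ)) :=
  {x | Tendsto (fun n => u n • x) atTop (𝓝 0)}

/-- The statistically characterized subgroup `t^s_{(u n)}(𝕋)`. -/
def statChar (u : ℕ → ℤ) : Set (AddCircle (1 : ℝ)) :=
  {x | ∀ ε : ℝ, 0 < ε → HasDensity {n : ℕ | ε ≤ ‖u n • x‖} 0}

/-- Density lifting invariant. -/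
def Dli (a : ℕ → ℕ) : Prop :=
  ∀ A : Set ℕ, A.Infinite → HasDensity A 0 → HasDensity (liftSet a A) 0

/-- Weakly density lifting invariant. -/
def WeaklyDli (a : ℕ → ℕ) : Prop :=
  ∃ A : Set ℕ, A.Infinite ∧ ∀ m : ℕ, HasDensity (liftSet a ((fun x => x - m) '' A)) 0

/-- Strongly non density lifting invariant. -/
def StronglyNonDli (a : ℕ → ℕ) : Prop :=
  ∀ A : Set ℕ, A.Infinite → 0 < upperDensity (liftSet a A)

/- ---------- auxiliary lemmas ---------- -/

lemma my_ratios_two_le (a : ℕ → ℕ) (ha : IsArithSeq a) (k : ℕ) : 2 ≤ ratios a (k + 1) := by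
  obtain ⟨h0, hmono, hdvd⟩ := ha
  have hpos : ∀ n, 0 < a n := by
    intro n
    induction n with
    | zero => simp [h0]
    | succ n ih => exact ih.trans (hmono n)
  obtain ⟨c, hc⟩ := hdvd k
  have hc2 : 2 ≤ c := by nlinarith [hmono k, hpos k]
  have h2 : 2 * a k ≤ a (k + 1) := by nlinarith [hpos k]
  have : 2 ≤ a (k + 1) / a k := (Nat.le_div_iff_mul_le (hpos k)).2 h2
  simpa [ratios] using this

lemma my_nseq_ge (a : ℕ → ℕ) (ha : IsArithSeq a) (k : ℕ) : k + 1 ≤ nseq a k := by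
  induction k with
  | zero => simp [nseq]
  | succ k ih =>
    have := my_ratios_two_le a ha k
    simp only [nseq]
    omega

lemma my_liftSet_mono (a : ℕ → ℕ) {S T : Set ℕ} (h : S ⊆ T) : liftSet a S ⊆ liftSet a T :=
  Set.biUnion_subset_biUnion_left h

lemma my_ncard_biUnion_le (f : ℕ → Set ℕ) (s : Finset ℕ) :
    (⋃ i ∈ s, f i).ncard ≤ ∑ i ∈ s, (f i).ncard := by
  classical
  induction s using Finset.induction with
  | empty => simp
  | insert _ _ h ih =>
    rw [Finset.set_biUnion_insert, Finset.sum_insert h]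
    exact le_trans (Set.ncard_union_le _ _) (by omega)

/-- if `A` is not b-bounded with `d̄(L(A)) > 0`, and `d(L(A')) = 0` for every
b-bounded `A' ⊆ A`, then there is a b-divergent `B ⊆ A` with `d(L(A \ B)) = 0`. -/
theorem exists_bDivergent_subset (a : ℕ → ℕ) (ha : IsArithSeq a) (A : Set ℕ)
    (hnb : ¬ ∃ M : ℕ, ∀ n ∈ A, ratios a n ≤ M)
    (hud : 0 < upperDensity (liftSet a A))
    (hsub : ∀ A' ⊆ A, (∃ M : ℕ, ∀ n ∈ A', ratios a n ≤ M) → HasDensity (liftSet a A') 0) :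
    ∃ B ⊆ A, (∀ M : ℕ, {n ∈ B | ratios a n ≤ M}.Finite) ∧
      HasDensity (liftSet a (A \ B)) 0 := by
  classical
  set AM : ℕ → Set ℕ := fun M => {n ∈ A | ratios a n ≤ M} with hAMdef
  have hdAM : ∀ M, HasDensity (liftSet a (AM M)) 0 :=
    fun M => hsub _ (fun n hn => hn.1) ⟨M, fun n hn => hn.2⟩
  have hchoice : ∀ M : ℕ, ∃ N : ℕ, M ≤ N ∧ ∀ n, N ≤ n →
      ((liftSet a (AM M) ∩ Set.Iio n).ncard : ℝ) / n < (1 / 2) ^ M := by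
    intro M
    obtain ⟨N, hN⟩ := (Metric.tendsto_atTop.1 (hdAM M)) ((1 / 2) ^ M) (by positivity)
    refine ⟨max N M, le_max_right _ _, fun n hn => ?_⟩
    have h := hN n (le_trans (le_max_left _ _) hn)
    rwa [Real.dist_eq, sub_zero, abs_of_nonneg (by positivity)] at h
  choose N hNge hNlt using hchoice
  set C : Set ℕ := ⋃ M, (AM M \ Set.Iio (N M + 1)) with hCdef
  have hCA : C ⊆ A := by
    intro x hx
    obtain ⟨M, hM⟩ := Set.mem_iUnion.1 hx
    exact hM.1.1
  refine ⟨A \ C, Set.diff_subset, ?_, ?_⟩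
  · intro M
    refine (Set.finite_Iio (N M + 1)).subset ?_
    rintro n ⟨⟨hnA, hnC⟩, hb⟩
    by_contra h
    exact hnC (Set.mem_iUnion.2 ⟨M, ⟨⟨hnA, hb⟩, h⟩⟩)
  · have hACC : A \ (A \ C) = C := Set.diff_diff_cancel_left hCA
    rw [hACC, HasDensity, Metric.tendsto_atTop]
    intro ε hε
    obtain ⟨M0, hM0⟩ := exists_pow_lt_of_lt_one (show (0:ℝ) < ε / 2 by linarith)
      (show (1:ℝ) / 2 < 1 by norm_num)
    refine ⟨max (N M0) 1, fun n hn => ?_⟩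
    have hn1 : 1 ≤ n := le_trans (le_max_right _ _) hn
    have hnN : N M0 ≤ n := le_trans (le_max_left _ _) hn
    have hnpos : (0:ℝ) < n := by exact_mod_cast hn1
    -- inclusion
    have hsub1 : liftSet a C ∩ Set.Iio n ⊆
        (liftSet a (AM M0) ∩ Set.Iio n) ∪
        (⋃ M ∈ Finset.Ioo M0 n, (liftSet a (AM M \ Set.Iio (N M + 1)) ∩ Set.Iio n)) := by
      rintro x ⟨hxL, hxn⟩
      obtain ⟨k, hkC, hxk⟩ := Set.mem_iUnion₂.1 hxL
      obtain ⟨M, hkM⟩ := Set.mem_iUnion.1 hkC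
      have hnsg : (k - 1) + 1 ≤ nseq a (k - 1) := my_nseq_ge a ha (k - 1)
      have hxlo : nseq a (k - 1) ≤ x := hxk.1
      have hkx : k ≤ x := by omega
      by_cases hM : M ≤ M0
      · exact Or.inl ⟨Set.mem_iUnion₂.2 ⟨k, ⟨hkM.1.1, le_trans hkM.1.2 hM⟩, hxk⟩, hxn⟩
      · refine Or.inr (Set.mem_iUnion₂.2 ⟨M, ?_, ⟨Set.mem_iUnion₂.2 ⟨k, hkM, hxk⟩, hxn⟩⟩)
        have hk2 : ¬ k < N M + 1 := hkM.2
        have hxn' : x < n := hxn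
        have hNM := hNge M
        simp only [Finset.mem_Ioo]
        omega
    have hfin : ∀ S : Set ℕ, (S ∩ Set.Iio n).Finite :=
      fun S => (Set.finite_Iio n).subset inter_subset_right
    have hRsub : ((liftSet a (AM M0) ∩ Set.Iio n) ∪
        (⋃ M ∈ Finset.Ioo M0 n, (liftSet a (AM M \ Set.Iio (N M + 1)) ∩ Set.Iio n)))
        ⊆ Set.Iio n := by
      rintro x (⟨-, hx⟩ | hx)
      · exact hx
      · obtain ⟨M, -, -, hx⟩ := Set.mem_iUnion₂.1 hx
        exact hx
    have hc1 : (liftSet a C ∩ Set.Iio n).ncard ≤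
        (liftSet a (AM M0) ∩ Set.Iio n).ncard +
        ∑ M ∈ Finset.Ioo M0 n, (liftSet a (AM M \ Set.Iio (N M + 1)) ∩ Set.Iio n).ncard := by
      refine le_trans (Set.ncard_le_ncard hsub1 ((Set.finite_Iio n).subset hRsub)) ?_
      refine le_trans (Set.ncard_union_le _ _) ?_
      exact Nat.add_le_add_left (my_ncard_biUnion_le _ _) _
    -- per-term bound
    have hterm : ∀ M ∈ Finset.Ioo M0 n,
        ((liftSet a (AM M \ Set.Iio (N M + 1)) ∩ Set.Iio n).ncard : ℝ) ≤ (1 / 2) ^ M * n := by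
      intro M hM
      by_cases hnM : N M ≤ n
      · have hle : (liftSet a (AM M \ Set.Iio (N M + 1)) ∩ Set.Iio n).ncard ≤
            (liftSet a (AM M) ∩ Set.Iio n).ncard :=
          Set.ncard_le_ncard
            (Set.inter_subset_inter_left _ (my_liftSet_mono a Set.diff_subset)) (hfin _)
        have h2 := hNlt M n hnM
        rw [div_lt_iff₀ hnpos] at h2
        calc ((liftSet a (AM M \ Set.Iio (N M + 1)) ∩ Set.Iio n).ncard : ℝ)
            ≤ ((liftSet a (AM M) ∩ Set.Iio n).ncard : ℝ) := by exact_mod_cast hle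
          _ ≤ (1 / 2) ^ M * n := h2.le
      · have hemp : liftSet a (AM M \ Set.Iio (N M + 1)) ∩ Set.Iio n = ∅ := by
          ext x
          simp only [Set.mem_inter_iff, Set.mem_Iio, Set.mem_empty_iff_false, iff_false,
            not_and]
          intro hxL hxn
          obtain ⟨k, hk, hxk⟩ := Set.mem_iUnion₂.1 hxL
          have hk2 : ¬ k < N M + 1 := hk.2
          have hnsg : (k - 1) + 1 ≤ nseq a (k - 1) := my_nseq_ge a ha (k - 1)
          have hxlo : nseq a (k - 1) ≤ x := hxk.1
          omega
        rw [hemp]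
        simp only [Set.ncard_empty, Nat.cast_zero]
        positivity
    -- sum bound
    have hgeo : ∑ M ∈ Finset.Ioo M0 n, ((1:ℝ) / 2) ^ M ≤ (1 / 2) ^ M0 := by
      rw [← Finset.Ico_add_one_left_eq_Ioo, Finset.sum_Ico_eq_sum_range]
      simp_rw [pow_add ((1:ℝ) / 2) (M0 + 1)]
      rw [← Finset.mul_sum]
      calc ((1:ℝ) / 2) ^ (M0 + 1) * ∑ i ∈ Finset.range (n - (M0 + 1)), ((1:ℝ) / 2) ^ i
          ≤ (1 / 2) ^ (M0 + 1) * 2 := by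
            gcongr
            · exact sum_geometric_two_le _
        _ = (1 / 2) ^ M0 := by ring
    have hsumb : ∑ M ∈ Finset.Ioo M0 n,
        ((liftSet a (AM M \ Set.Iio (N M + 1)) ∩ Set.Iio n).ncard : ℝ) ≤ (1 / 2) ^ M0 * n := by
      calc ∑ M ∈ Finset.Ioo M0 n,
          ((liftSet a (AM M \ Set.Iio (N M + 1)) ∩ Set.Iio n).ncard : ℝ)
          ≤ ∑ M ∈ Finset.Ioo M0 n, ((1:ℝ) / 2) ^ M * (n:ℝ) := Finset.sum_le_sum hterm
        _ = (∑ M ∈ Finset.Ioo M0 n, ((1:ℝ) / 2) ^ M) * n := by rw [Finset.sum_mul]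
        _ ≤ (1 / 2) ^ M0 * n := by
            apply mul_le_mul_of_nonneg_right hgeo hnpos.le
    have hA0 := hNlt M0 n hnN
    rw [div_lt_iff₀ hnpos] at hA0
    have hcast : ((liftSet a C ∩ Set.Iio n).ncard : ℝ) ≤
        ((liftSet a (AM M0) ∩ Set.Iio n).ncard : ℝ) +
        ∑ M ∈ Finset.Ioo M0 n,
          ((liftSet a (AM M \ Set.Iio (N M + 1)) ∩ Set.Iio n).ncard : ℝ) := by
      exact_mod_cast hc1
    have hhalf : ((1:ℝ) / 2) ^ M0 * n ≤ ε / 2 * n :=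
      mul_le_mul_of_nonneg_right hM0.le hnpos.le
    rw [Real.dist_eq, sub_zero, abs_of_nonneg (by positivity), div_lt_iff₀ hnpos]
    linarith
end
end

section
/- Let (a_n) be an arithmetic sequence and let x ∈ T be such that supp(x) is co-finite in ℕ. If d̄(L(supp(x) \ supp_q(x))) > 0, then x ∉ t^s_{(d_n)}(T). -/
open Filter Topology Set

noncomputable section

namespace Aux

variable {a : ℕ → ℕ}

lemma a_pos (ha : IsArithSeq a) : ∀ n, 0 < a n := by
  intro n
  induction n with
  | zero => simp [ha.1]
  | succ k ih => exact lt_trans ih (ha.2.1 k)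

lemma a_mul (ha : IsArithSeq a) (n : ℕ) : a (n + 1) = a n * ratios a (n + 1) := by
  have h := ha.2.2 n
  have : ratios a (n + 1) = a (n + 1) / a n := by simp [ratios]
  rw [this, Nat.mul_div_cancel' h]

lemma ratios_ge_two (ha : IsArithSeq a) (n : ℕ) : 2 ≤ ratios a (n + 1) := by
  have h1 := ha.2.1 n
  have h2 := a_mul ha n
  have h3 := a_pos ha n
  nlinarith [Nat.lt_of_mul_lt_mul_left (a := a n) (b := 1) (c := ratios a (n+1))]

lemma a_strictMono (ha : IsArithSeq a) : StrictMono a :=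
  strictMono_nat_of_lt_succ ha.2.1

lemma a_dvd (ha : IsArithSeq a) {m n : ℕ} (h : m ≤ n) : a m ∣ a n := by
  induction n with
  | zero => simp_all
  | succ k ih =>
    rcases Nat.lt_or_ge m (k+1) with h' | h'
    · exact dvd_trans (ih (by omega)) (ha.2.2 k)
    · have : m = k + 1 := by omega
      simp [this]

lemma two_pow_le (ha : IsArithSeq a) (n : ℕ) : 2 ^ n ≤ a n := by
  induction n with
  | zero => simp [ha.1]
  | succ k ih =>
    have h2 := ratios_ge_two ha k
    have := a_mul ha k
    have := a_pos ha k
    calc 2 ^ (k+1) = 2 ^ k * 2 := by ring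
    _ ≤ a k * ratios a (k+1) := Nat.mul_le_mul ih h2
    _ = a (k+1) := (a_mul ha k).symm

lemma nseq_one_le (k : ℕ) : 1 ≤ nseq a k := by
  induction k with
  | zero => simp [nseq]
  | succ k ih => simp only [nseq]; omega

lemma nseq_strictMono (ha : IsArithSeq a) : StrictMono (nseq a) := by
  apply strictMono_nat_of_lt_succ
  intro k
  have := ratios_ge_two ha k
  simp only [nseq]; omega

lemma nseq_le_nseq (ha : IsArithSeq a) {m n : ℕ} (h : m ≤ n) : nseq a m ≤ nseq a n :=
  (nseq_strictMono ha).monotone h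

lemma nseq_ge (ha : IsArithSeq a) (k : ℕ) : k + 1 ≤ nseq a k := by
  induction k with
  | zero => simp [nseq]
  | succ k ih =>
    have := ratios_ge_two ha k
    simp only [nseq]; omega

/-- integers are 0 in AddCircle 1 -/
lemma intCoe_zero (m : ℤ) : ((m : ℝ) : AddCircle (1:ℝ)) = 0 := by
  have : (m : ℝ) = m • (1:ℝ) := by simp
  rw [this, AddCircle.coe_zsmul, AddCircle.coe_period, smul_zero]

lemma natCoe_zero (m : ℕ) : ((m : ℝ) : AddCircle (1:ℝ)) = 0 := by
  have := intCoe_zero (m : ℤ)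
  push_cast at this
  exact this

lemma norm_lb {z ε : ℝ} (h0 : 0 ≤ ε) (h1 : ε ≤ z) (h2 : z ≤ 1 - ε) :
    ε ≤ ‖(z : AddCircle (1:ℝ))‖ := by
  rw [AddCircle.norm_eq 1]
  simp only [inv_one, one_mul, mul_one]
  rcases le_or_gt (round z) 0 with h | h
  · have : ((round z : ℤ) : ℝ) ≤ 0 := by exact_mod_cast h
    rw [abs_of_nonneg (by linarith)]
    linarith
  · have : (1:ℝ) ≤ ((round z : ℤ) : ℝ) := by exact_mod_cast h
    rw [abs_of_nonpos (by linarith)]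
    linarith


lemma norm_coe_add_lb (u v : ℝ) :
    ‖((v : ℝ) : AddCircle (1:ℝ))‖ - ‖((u : ℝ) : AddCircle (1:ℝ))‖
      ≤ ‖((u + v : ℝ) : AddCircle (1:ℝ))‖ := by
  rw [AddCircle.coe_add]
  have h : ‖((v : ℝ) : AddCircle (1:ℝ))‖ ≤ ‖((u:ℝ) : AddCircle (1:ℝ)) + ((v:ℝ) : AddCircle (1:ℝ))‖
      + ‖((u:ℝ) : AddCircle (1:ℝ))‖ := by
    calc ‖((v : ℝ) : AddCircle (1:ℝ))‖
        = ‖((u:ℝ) : AddCircle (1:ℝ)) + ((v:ℝ) : AddCircle (1:ℝ)) - ((u:ℝ) : AddCircle (1:ℝ))‖ := by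
          congr 1; abel
      _ ≤ _ := norm_sub_le _ _
  linarith

open scoped Classical in
/-- counting lemma, half case -/
lemma count_good_half (b : ℕ) (hb : 3 ≤ b) (y : ℝ) (hy1 : 1/(b:ℝ) ≤ y) (hy2 : y ≤ 1/2) :
    ((b:ℝ) - 1) ≤ 16 * (((Finset.Icc 2 b).filter
      (fun r : ℕ => 1/16 ≤ ‖(((r : ℝ) * y : ℝ) : AddCircle (1:ℝ))‖)).card : ℝ) := by
  have hb0 : (0:ℝ) < b := by positivity
  have hy0 : 0 < y := lt_of_lt_of_le (by positivity) hy1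
  set good := fun r : ℕ => 1/16 ≤ ‖(((r : ℝ) * y : ℝ) : AddCircle (1:ℝ))‖ with hgood
  set G := (Finset.Icc 2 b).filter good with hG
  rcases le_or_gt b 8 with hb8 | hb8
  -- small case : one of r = 2, 3 is good
  · have hbR8 : (b:ℝ) ≤ 8 := by exact_mod_cast hb8
    have hyb : (1:ℝ)/8 ≤ y := by
      calc (1:ℝ)/8 ≤ 1/(b:ℝ) := by
            rw [div_le_div_iff₀ (by norm_num) hb0]; linarith
      _ ≤ y := hy1
    have hy_norm : 1/8 ≤ ‖((y : ℝ) : AddCircle (1:ℝ))‖ :=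
      norm_lb (by norm_num) hyb (by linarith)
    have hone : ∃ r ∈ Finset.Icc 2 b, good r := by
      by_cases h2 : good 2
      · exact ⟨2, Finset.mem_Icc.2 ⟨le_refl 2, by omega⟩, h2⟩
      · refine ⟨3, Finset.mem_Icc.2 ⟨by omega, hb⟩, ?_⟩
        simp only [hgood, not_le] at h2 ⊢
        have h3 : ((3:ℕ):ℝ) * y = ((2:ℕ):ℝ) * y + y := by push_cast; ring
        rw [h3]
        have hkey := norm_coe_add_lb (((2:ℕ):ℝ) * y) y
        set X := ‖((((2:ℕ):ℝ) * y + y : ℝ) : AddCircle (1:ℝ))‖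
        set Z := ‖((((2:ℕ):ℝ) * y : ℝ) : AddCircle (1:ℝ))‖
        set Y := ‖((y:ℝ) : AddCircle (1:ℝ))‖
        linarith
    obtain ⟨r, hr, hgr⟩ := hone
    have hcard : 1 ≤ G.card := Finset.card_pos.2 ⟨r, Finset.mem_filter.2 ⟨hr, hgr⟩⟩
    have hcardR : (1:ℝ) ≤ (G.card : ℝ) := by exact_mod_cast hcard
    linarith
  -- large case : injection argument
  · have hbR : (9:ℝ) ≤ b := by exact_mod_cast hb8
    have hby : (1:ℝ) ≤ (b:ℝ) * y := by
      rw [div_le_iff₀ hb0] at hy1; linarith [mul_comm y (b:ℝ)]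
    have hex : ∃ t : ℕ, (1:ℝ)/8 ≤ (t:ℝ) * y := ⟨b, by linarith⟩
    set t := Nat.find hex with htdef
    have ht : (1:ℝ)/8 ≤ (t:ℝ) * y := Nat.find_spec hex
    have ht1 : 1 ≤ t := by
      rcases Nat.eq_zero_or_pos t with h | h
      · exfalso; rw [h] at ht; norm_num at ht
      · exact h
    have htprev : ((t-1:ℕ):ℝ) * y < 1/8 := by
      have := Nat.find_min hex (show t-1 < t by omega)
      push_neg at this
      exact this
    have htcast : ((t-1:ℕ):ℝ) = (t:ℝ) - 1 := by
      have h' : (t-1) + 1 = t := by omega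
      have := congrArg (Nat.cast : ℕ → ℝ) h'
      push_cast at this
      linarith
    have htp : ((t:ℝ) - 1) * y < 1/8 := htcast ▸ htprev
    have ht5 : (t:ℝ) * y ≤ 5/8 := by nlinarith
    have ht8 : 8*(t:ℝ) < (b:ℝ) + 8 := by
      have h2 : ((t:ℝ) - 1) * 8 * y < 1 := by nlinarith
      have h4 : ((t:ℝ) - 1) * 8 * y < (b:ℝ) * y → ((t:ℝ)-1) * 8 < b := by
        intro h
        by_contra hc
        push_neg at hc
        nlinarith
      have := h4 (by nlinarith)
      nlinarith
    have htb : t ≤ b := by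
      have : (t:ℝ) ≤ (b:ℝ) := by linarith
      exact_mod_cast this
    have htnorm : 1/8 ≤ ‖(((t:ℝ) * y : ℝ) : AddCircle (1:ℝ))‖ :=
      norm_lb (by norm_num) ht (by linarith)
    set B := (Finset.Icc 2 b).filter (fun r => ¬ good r) with hB
    have hcards : G.card + B.card = b - 1 := by
      rw [hG, hB, Finset.card_filter_add_card_filter_not, Nat.card_Icc]
      omega
    set B' := B.filter (fun r => r + t ≤ b) with hB'
    have hinj : B'.card ≤ G.card := by
      apply Finset.card_le_card_of_injOn (fun r => r + t)
      · intro r hr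
        simp only [Finset.mem_coe, hB', hB, Finset.mem_filter, Finset.mem_Icc] at hr
        obtain ⟨⟨⟨hr2, hrb⟩, hbad⟩, hrt⟩ := hr
        simp only [Finset.mem_coe, hG, Finset.mem_filter, Finset.mem_Icc]
        refine ⟨⟨by omega, hrt⟩, ?_⟩
        simp only [hgood, not_le] at hbad ⊢
        have hsplit : ((r+t:ℕ):ℝ) * y = (r:ℝ) * y + (t:ℝ) * y := by push_cast; ring
        rw [hsplit]
        have hkey := norm_coe_add_lb ((r:ℝ) * y) ((t:ℝ) * y)
        set X := ‖(((r:ℝ) * y + (t:ℝ) * y : ℝ) : AddCircle (1:ℝ))‖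
        set Z := ‖(((r:ℝ) * y : ℝ) : AddCircle (1:ℝ))‖
        set Y := ‖(((t:ℝ) * y : ℝ) : AddCircle (1:ℝ))‖
        linarith
      · intro r₁ h₁ r₂ h₂ h
        simpa using h
    have hBsplit : B.card ≤ B'.card + t := by
      have h1 : B'.card + (B.filter (fun r => ¬ (r + t ≤ b))).card = B.card :=
        Finset.card_filter_add_card_filter_not (p := fun r => r + t ≤ b)
      have h2 : (B.filter (fun r => ¬ (r + t ≤ b))).card ≤ t := by
        have hsub : B.filter (fun r => ¬ (r + t ≤ b)) ⊆ Finset.Ioc (b - t) b := by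
          intro r hr
          simp only [hB, Finset.mem_filter, Finset.mem_Icc, not_le] at hr
          simp only [Finset.mem_Ioc]
          omega
        calc (B.filter (fun r => ¬ (r + t ≤ b))).card ≤ (Finset.Ioc (b-t) b).card :=
              Finset.card_le_card hsub
        _ = t := by rw [Nat.card_Ioc]; omega
      omega
    -- b - 1 ≤ 2 G.card + t
    have hfin : (b:ℝ) - 1 ≤ 2 * G.card + t := by
      have : b - 1 ≤ 2 * G.card + t := by omega
      have := (Nat.cast_le (α := ℝ)).2 this
      push_cast at this
      have hb1 : ((b - 1 : ℕ) : ℝ) = (b:ℝ) - 1 := by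
        have : (1:ℕ) ≤ b := by omega
        push_cast [Nat.cast_sub this]
        ring
      linarith [hb1 ▸ this]
    have hGc : (0:ℝ) ≤ (G.card : ℝ) := by positivity
    linarith

/-- full counting lemma -/
lemma count_good (b : ℕ) (hb : 3 ≤ b) (y : ℝ) (hy1 : 1/(b:ℝ) ≤ y) (hy2 : y ≤ 1 - 1/(b:ℝ)) :
    ((b:ℝ) - 1) ≤ 16 * (((Finset.Icc 2 b).filter
      (fun r : ℕ => 1/16 ≤ ‖(((r : ℝ) * y : ℝ) : AddCircle (1:ℝ))‖)).card : ℝ) := by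
  classical
  rcases le_or_gt y (1/2) with h | h
  · exact count_good_half b hb y hy1 h
  · have hb0 : (0:ℝ) < b := by positivity
    have h1 : 1/(b:ℝ) ≤ 1 - y := by linarith
    have h2 : 1 - y ≤ 1/2 := by linarith
    have := count_good_half b hb (1 - y) h1 h2
    have heq : ∀ r : ℕ, ‖(((r:ℝ) * (1 - y) : ℝ) : AddCircle (1:ℝ))‖
        = ‖(((r:ℝ) * y : ℝ) : AddCircle (1:ℝ))‖ := by
      intro r
      have : ((r:ℝ) * (1 - y) : ℝ) = (r:ℝ) + (-((r:ℝ) * y)) := by ring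
      rw [this, AddCircle.coe_add]
      have hr0 : (((r:ℝ)) : AddCircle (1:ℝ)) = 0 := by
        have : ((r:ℝ)) = (r:ℤ) • (1:ℝ) := by rw [zsmul_eq_mul]; push_cast; ring
        rw [this, AddCircle.coe_zsmul, AddCircle.coe_period, smul_zero]
      rw [hr0, zero_add, AddCircle.coe_neg, norm_neg]
    have hfeq : (Finset.Icc 2 b).filter
          (fun r : ℕ => 1/16 ≤ ‖(((r : ℝ) * (1 - y) : ℝ) : AddCircle (1:ℝ))‖)
        = (Finset.Icc 2 b).filter
          (fun r : ℕ => 1/16 ≤ ‖(((r : ℝ) * y : ℝ) : AddCircle (1:ℝ))‖) := by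
      apply Finset.filter_congr
      intro r _
      rw [heq r]
    rwa [hfeq] at this


variable {c : ℕ → ℕ}

section digits

/-- term bound: c (n+1) / a (n+1) ≤ 1/a n - 1/a (n+1) -/
lemma digit_term_le (ha : IsArithSeq a) (hcle : ∀ n, 1 ≤ n → c n ≤ ratios a n - 1) (n : ℕ) :
    (c (n+1) : ℝ) / a (n+1) ≤ 1 / a n - 1 / a (n+1) := by
  have hb := ratios_ge_two ha n
  have hA : (0:ℝ) < a n := by exact_mod_cast a_pos ha n
  have hA1 : (0:ℝ) < a (n+1) := by exact_mod_cast a_pos ha (n+1)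
  have hcb : (c (n+1) : ℝ) ≤ (ratios a (n+1) : ℝ) - 1 := by
    have h := hcle (n+1) (by omega)
    have h2 : (c (n+1) : ℝ) ≤ ((ratios a (n+1) - 1 : ℕ) : ℝ) := by exact_mod_cast h
    rw [Nat.cast_sub (by omega)] at h2
    push_cast at h2
    linarith
  have hmul : (a (n+1) : ℝ) = (a n : ℝ) * (ratios a (n+1) : ℝ) := by
    exact_mod_cast a_mul ha n
  rw [div_le_iff₀ hA1, sub_mul, one_div, one_div]
  rw [hmul]
  have hBpos : (0:ℝ) < (ratios a (n+1) : ℝ) := by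
    have : (0:ℕ) < ratios a (n+1) := by omega
    exact_mod_cast this
  field_simp
  nlinarith

lemma summable_digits (ha : IsArithSeq a) (hc0 : c 0 = 0) (hcle : ∀ n, 1 ≤ n → c n ≤ ratios a n - 1) : Summable (fun n => (c n : ℝ) / a n) := by
  have hgs : Summable (fun n : ℕ => 2 * (1/2:ℝ)^n) :=
    (summable_geometric_of_lt_one (by norm_num) (by norm_num)).mul_left 2
  apply Summable.of_nonneg_of_le (fun n => by positivity) _ hgs
  · intro n
    cases n with
    | zero =>
      norm_num [hc0]
    | succ m =>
      have h1 := digit_term_le ha hcle m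
      have h2 : (1:ℝ)/a (m+1) ≥ 0 := by positivity
      have h3 : (1:ℝ)/a m ≤ (1/2)^m := by
        rw [div_le_iff₀ (by exact_mod_cast a_pos ha m)]
        have h4 : (2:ℝ)^m ≤ a m := by exact_mod_cast two_pow_le ha m
        have : (1/2:ℝ)^m * 2^m = 1 := by
          rw [← mul_pow]; norm_num
        nlinarith [pow_pos (show (0:ℝ) < 1/2 by norm_num) m]
      calc (c (m+1) : ℝ) / a (m+1) ≤ 1/a m - 1/a (m+1) := h1
      _ ≤ 1/a m := by linarith
      _ ≤ (1/2)^m := h3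
      _ ≤ 2 * (1/2)^(m+1) := by
          rw [pow_succ]
          ring_nf
          linarith [pow_pos (show (0:ℝ) < 1/2 by norm_num) m]

/-- tail sum bound -/
lemma tail_sum_le (ha : IsArithSeq a) (hcle : ∀ n, 1 ≤ n → c n ≤ ratios a n - 1) (K : ℕ) :
    ∑' n : ℕ, (c (n + (K+1)) : ℝ) / a (n + (K+1)) ≤ 1 / a K := by
  apply Real.tsum_le_of_sum_range_le (fun n => by positivity)
  intro m
  have key : ∀ m, ∑ i ∈ Finset.range m, (c (i + (K+1)) : ℝ) / a (i + (K+1))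
      ≤ 1 / a K - 1 / a (K + m) := by
    intro m
    induction m with
    | zero => simp
    | succ j ih =>
      rw [Finset.sum_range_succ]
      have h1 := digit_term_le ha hcle (K + j)
      have heq : j + (K+1) = (K + j) + 1 := by omega
      rw [heq]
      have : (K + j) + 1 = K + (j+1) := by omega
      rw [this] at h1 ⊢
      linarith
  have h := key m
  have : (0:ℝ) ≤ 1 / a (K + m) := by positivity
  linarith

/-- the sum splits as integer plus scaled tail -/
lemma exists_int_rep (ha : IsArithSeq a) (hc0 : c 0 = 0) (hcle : ∀ n, 1 ≤ n → c n ≤ ratios a n - 1) (k : ℕ) :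
    ∃ M : ℤ, (a k : ℝ) * (∑' n : ℕ, (c n : ℝ) / a n)
      = (M : ℝ) + (a k : ℝ) * ∑' n : ℕ, (c (n + (k+1)) : ℝ) / a (n + (k+1)) := by
  have hsum := summable_digits ha hc0 hcle
  have hsplit := Summable.sum_add_tsum_nat_add (k+1) hsum
  refine ⟨((∑ i ∈ Finset.range (k+1), c i * (a k / a i) : ℕ) : ℤ), ?_⟩
  rw [← hsplit, mul_add]
  congr 1
  rw [Finset.mul_sum, Int.cast_natCast, Nat.cast_sum]
  apply Finset.sum_congr rfl
  intro i hi
  have hile : i ≤ k := by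
    have := Finset.mem_range.1 hi; omega
  have hdvd := a_dvd ha hile
  have hne : (a i : ℝ) ≠ 0 := by
    have := a_pos ha i; positivity
  rw [Nat.cast_mul, Nat.cast_div hdvd hne]
  field_simp

set_option maxHeartbeats 1000000 in
/-- bounds on the scaled tail T k when the digit c (k+1) is internal -/
lemma T_bounds (ha : IsArithSeq a) (hc0 : c 0 = 0) (hcle : ∀ n, 1 ≤ n → c n ≤ ratios a n - 1) (k : ℕ) (h1 : 1 ≤ c (k+1)) (h2 : c (k+1) ≤ ratios a (k+1) - 2) :
    1/(ratios a (k+1) : ℝ) ≤ (a k : ℝ) * ∑' n : ℕ, (c (n + (k+1)) : ℝ) / a (n + (k+1))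
    ∧ (a k : ℝ) * (∑' n : ℕ, (c (n + (k+1)) : ℝ) / a (n + (k+1)))
      ≤ 1 - 1/(ratios a (k+1) : ℝ) := by
  have hsum := summable_digits ha hc0 hcle
  have hshift : Summable (fun n => (c (n + (k+1)) : ℝ) / a (n + (k+1))) :=
    (summable_nat_add_iff (k+1)).2 hsum
  have hb := ratios_ge_two ha k
  have hbR : (2:ℝ) ≤ (ratios a (k+1) : ℝ) := by exact_mod_cast hb
  have hA : (0:ℝ) < a k := by exact_mod_cast a_pos ha k
  have hA1 : (0:ℝ) < a (k+1) := by exact_mod_cast a_pos ha (k+1)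
  have hmul : (a (k+1) : ℝ) = (a k : ℝ) * (ratios a (k+1) : ℝ) := by
    exact_mod_cast a_mul ha k
  -- pull out first term
  have hzero : (∑' n : ℕ, (c (n + (k+1)) : ℝ) / a (n + (k+1)))
      = (c (k+1) : ℝ) / a (k+1) + ∑' n : ℕ, (c (n + (k+2)) : ℝ) / a (n + (k+2)) := by
    rw [Summable.tsum_eq_zero_add hshift]
    congr 1
    · norm_num
    · apply tsum_congr
      intro n
      have : n + 1 + (k+1) = n + (k+2) := by omega
      rw [this]
  have htail0 : (0:ℝ) ≤ ∑' n : ℕ, (c (n + (k+2)) : ℝ) / a (n + (k+2)) :=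
    tsum_nonneg (fun n => by positivity)
  have htail1 : (∑' n : ℕ, (c (n + (k+2)) : ℝ) / a (n + (k+2))) ≤ 1 / a (k+1) :=
    tail_sum_le ha hcle (k+1)
  have hc1 : (1:ℝ) ≤ (c (k+1) : ℝ) := by exact_mod_cast h1
  have hc2 : (c (k+1) : ℝ) ≤ (ratios a (k+1) : ℝ) - 2 := by
    have : (c (k+1) : ℝ) ≤ ((ratios a (k+1) - 2 : ℕ) : ℝ) := by exact_mod_cast h2
    rwa [Nat.cast_sub (by omega)] at this
  have hak1 : (a k : ℝ) / (a (k+1) : ℝ) = 1 / (ratios a (k+1) : ℝ) := by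
    rw [hmul]
    field_simp
  constructor
  · rw [hzero, mul_add]
    have hlow : 1/(ratios a (k+1) : ℝ) ≤ (a k : ℝ) * ((c (k+1) : ℝ) / a (k+1)) := by
      have : (a k : ℝ) * ((c (k+1) : ℝ) / a (k+1)) = (c (k+1) : ℝ) * ((a k : ℝ) / a (k+1)) := by
        ring
      rw [this, hak1]
      have hpos : (0:ℝ) < 1 / (ratios a (k+1) : ℝ) := by positivity
      nlinarith
    nlinarith
  · rw [hzero, mul_add]
    have hup1 : (a k : ℝ) * ((c (k+1) : ℝ) / a (k+1)) ≤ 1 - 2/(ratios a (k+1):ℝ) := by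
      have heq : (a k : ℝ) * ((c (k+1) : ℝ) / a (k+1)) = (c (k+1) : ℝ) * ((a k : ℝ) / a (k+1)) := by
        ring
      rw [heq, hak1]
      have hpos : (0:ℝ) < 1 / (ratios a (k+1) : ℝ) := by positivity
      have : (c (k+1):ℝ) * (1/(ratios a (k+1):ℝ)) ≤ ((ratios a (k+1):ℝ) - 2) * (1/(ratios a (k+1):ℝ)) := by
        nlinarith
      calc (c (k+1):ℝ) * (1/(ratios a (k+1):ℝ)) ≤ ((ratios a (k+1):ℝ) - 2) * (1/(ratios a (k+1):ℝ)) := this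
      _ = 1 - 2/(ratios a (k+1):ℝ) := by
          field_simp
    have hup2 : (a k : ℝ) * (∑' n : ℕ, (c (n + (k+2)) : ℝ) / a (n + (k+2))) ≤ 1/(ratios a (k+1):ℝ) := by
      calc (a k : ℝ) * (∑' n : ℕ, (c (n + (k+2)) : ℝ) / a (n + (k+2)))
          ≤ (a k : ℝ) * (1 / a (k+1)) := by nlinarith
      _ = 1/(ratios a (k+1):ℝ) := by rw [← hak1]; ring
    have hhh : 2/(ratios a (k+1):ℝ) = 2 * (1/(ratios a (k+1):ℝ)) := by ring
    linarith

end digits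

def Pd (a : ℕ → ℕ) : ℕ → Prop :=
  fun m => ∃ k r : ℕ, 1 ≤ r ∧ r < ratios a (k + 1) ∧ m = r * a k

lemma dSeq_eq_nth : dSeq a = Nat.nth (Pd a) := rfl

lemma Pd_a (ha : IsArithSeq a) (k : ℕ) : Pd a (a k) :=
  ⟨k, 1, le_refl 1, lt_of_lt_of_le one_lt_two (ratios_ge_two ha k), (one_mul _).symm⟩

lemma Pd_infinite (ha : IsArithSeq a) : (setOf (Pd a)).Infinite :=
  Set.infinite_of_injective_forall_mem (a_strictMono ha).injective
    (fun k => Pd_a ha k)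

open scoped Classical in
lemma count_step (N₁ N₂ : ℕ) (h : N₁ < N₂) (hP : Pd a N₁)
    (huniq : ∀ m, N₁ ≤ m → m < N₂ → Pd a m → m = N₁) :
    Nat.count (Pd a) N₂ = Nat.count (Pd a) N₁ + 1 := by
  rw [Nat.count_eq_card_filter_range, Nat.count_eq_card_filter_range]
  have hsplit : Finset.range N₂ = Finset.range N₁ ∪ Finset.Ico N₁ N₂ := by
    ext m
    simp only [Finset.mem_range, Finset.mem_union, Finset.mem_Ico]
    omega
  have hdisj : Disjoint (Finset.filter (Pd a) (Finset.range N₁))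
      (Finset.filter (Pd a) (Finset.Ico N₁ N₂)) := by
    apply Finset.disjoint_filter_filter
    rw [Finset.disjoint_left]
    intro m hm hm'
    simp only [Finset.mem_range] at hm
    simp only [Finset.mem_Ico] at hm'
    omega
  rw [hsplit, Finset.filter_union, Finset.card_union_of_disjoint hdisj]
  congr 1
  have : Finset.filter (Pd a) (Finset.Ico N₁ N₂) = {N₁} := by
    ext m
    simp only [Finset.mem_filter, Finset.mem_Ico, Finset.mem_singleton]
    constructor
    · rintro ⟨⟨hm1, hm2⟩, hpm⟩
      exact huniq m hm1 hm2 hpm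
    · rintro rfl
      exact ⟨⟨le_refl _, h⟩, hP⟩
  rw [this, Finset.card_singleton]

lemma Pd_in_block (ha : IsArithSeq a) (k r m : ℕ) (hr1 : 1 ≤ r)
    (hrb : r < ratios a (k+1)) (h1 : r * a k ≤ m) (h2 : m < (r+1) * a k)
    (hm : Pd a m) : m = r * a k := by
  obtain ⟨k', r', hr'1, hr'b, rfl⟩ := hm
  have hak := a_pos ha k
  have hak' := a_pos ha k'
  have hmul := a_mul ha k
  have hmul' := a_mul ha k'
  have hsm := a_strictMono ha
  -- m < a (k+1)
  have hA : r' * a k' < a (k+1) := by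
    calc r' * a k' < (r+1) * a k := h2
    _ ≤ ratios a (k+1) * a k := Nat.mul_le_mul_right _ (by omega)
    _ = a (k+1) := by rw [hmul]; ring
  have hB : a k' ≤ r' * a k' := Nat.le_mul_of_pos_left _ (by omega)
  have hkk : k' ≤ k := by
    by_contra hc
    push_neg at hc
    have : a (k+1) ≤ a k' := hsm.monotone hc
    omega
  have hC : r' * a k' < a (k'+1) := by
    calc r' * a k' ≤ (ratios a (k'+1) - 1) * a k' := Nat.mul_le_mul_right _ (by omega)
    _ < ratios a (k'+1) * a k' := by
        have := ratios_ge_two ha k'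
        exact (Nat.mul_lt_mul_right (by omega)).2 (by omega)
    _ = a (k'+1) := by rw [hmul']; ring
  have hD : a k ≤ r' * a k' := le_trans (Nat.le_mul_of_pos_left _ (by omega)) h1
  have hkk' : k ≤ k' := by
    by_contra hc
    push_neg at hc
    have : a (k'+1) ≤ a k := hsm.monotone hc
    omega
  have hk : k' = k := le_antisymm hkk hkk'
  subst hk
  have hle : r ≤ r' := Nat.le_of_mul_le_mul_right h1 (by omega)
  have hlt : r' < r + 1 := by
    by_contra hc
    push_neg at hc
    have : (r+1) * a k' ≤ r' * a k' := Nat.mul_le_mul_right _ hc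
    omega
  have : r' = r := by omega
  rw [this]

open scoped Classical in
lemma count_inner (ha : IsArithSeq a) (k : ℕ)
    (hbase : Nat.count (Pd a) (a k) = nseq a k - 1) :
    ∀ r, 1 ≤ r → r ≤ ratios a (k+1) - 1 →
      Nat.count (Pd a) (r * a k) = nseq a k - 1 + (r - 1) := by
  intro r
  induction r with
  | zero => omega
  | succ r ih =>
    intro _ hrb
    rcases Nat.eq_zero_or_pos r with hr0 | hr0
    · subst hr0
      simpa using hbase
    · have hb2 := ratios_ge_two ha k
      have hak := a_pos ha k
      have hstep : Nat.count (Pd a) ((r+1) * a k) = Nat.count (Pd a) (r * a k) + 1 := by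
        apply count_step (r * a k) ((r+1) * a k)
        · exact (Nat.mul_lt_mul_right hak).2 (by omega : r < r + 1)
        · exact ⟨k, r, hr0, by omega, rfl⟩
        · intro m hm1 hm2 hpm
          exact Pd_in_block ha k r m hr0 (by omega) hm1 hm2 hpm
      rw [hstep, ih hr0 (by omega)]
      omega

open scoped Classical in
lemma count_base (ha : IsArithSeq a) : ∀ k, Nat.count (Pd a) (a k) = nseq a k - 1 := by
  intro k
  induction k with
  | zero =>
    have h1 : a 0 = 1 := ha.1
    rw [h1]
    have : Nat.count (Pd a) 1 = Nat.count (Pd a) 0 + if Pd a 0 then 1 else 0 :=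
      Nat.count_succ _ _
    rw [this, Nat.count_zero, if_neg]
    · simp [nseq]
    · rintro ⟨k', r', hr'1, _, habs⟩
      have := a_pos ha k'
      have : 1 ≤ r' * a k' := Nat.one_le_iff_ne_zero.2 (by positivity)
      omega
  | succ k ih =>
    have hb2 := ratios_ge_two ha k
    have hak := a_pos ha k
    set b := ratios a (k+1) with hbdef
    have hmul := a_mul ha k
    have hstep : Nat.count (Pd a) (a (k+1)) = Nat.count (Pd a) ((b-1) * a k) + 1 := by
      apply count_step ((b-1) * a k) (a (k+1))
      · calc (b-1) * a k < b * a k := (Nat.mul_lt_mul_right hak).2 (by omega)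
        _ = a (k+1) := by rw [hmul]; ring
      · exact ⟨k, b-1, by omega, by omega, rfl⟩
      · intro m hm1 hm2 hpm
        apply Pd_in_block ha k (b-1) m (by omega) (by omega) hm1 _ hpm
        have : (b-1+1) * a k = a (k+1) := by
          rw [hmul]
          have : b - 1 + 1 = b := by omega
          rw [this]; ring
        omega
    rw [hstep, count_inner ha k ih (b-1) (by omega) (by omega)]
    have hn1 := nseq_one_le (a := a) k
    show _ = nseq a (k+1) - 1
    simp only [nseq]
    omega

open scoped Classical in
lemma dSeq_formula (ha : IsArithSeq a) (k r : ℕ) (hr1 : 1 ≤ r)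
    (hrb : r ≤ ratios a (k+1) - 1) :
    dSeq a (nseq a k - 1 + (r - 1)) = r * a k := by
  have hc := count_inner ha k (count_base ha k) r hr1 hrb
  have hp : Pd a (r * a k) := ⟨k, r, hr1, by have := ratios_ge_two ha k; omega, rfl⟩
  have := Nat.nth_count hp
  rw [hc] at this
  rw [dSeq_eq_nth]
  exact this

lemma dSeq_block (ha : IsArithSeq a) (j n : ℕ) (hj : 1 ≤ j)
    (h1 : nseq a (j-1) ≤ n) (h2 : n ≤ nseq a j - 1) :
    ∃ r, 2 ≤ r ∧ r ≤ ratios a j ∧ n = nseq a (j-1) + (r - 2) ∧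
      dSeq a n = r * a (j-1) := by
  obtain ⟨k, rfl⟩ : ∃ k, j = k + 1 := ⟨j - 1, by omega⟩
  simp only [Nat.add_sub_cancel] at h1 ⊢
  have hb2 := ratios_ge_two ha k
  set b := ratios a (k+1) with hbdef
  have hnseq : nseq a (k+1) = nseq a k + (b - 1) := rfl
  have hn1 := nseq_one_le (a := a) k
  have hn2 : n ≤ nseq a k + b - 2 := by omega
  set r := n - nseq a k + 2 with hrdef
  have hr2 : 2 ≤ r := by omega
  have hrb : r ≤ b := by omega
  refine ⟨r, hr2, hrb, by omega, ?_⟩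
  rcases Nat.lt_or_ge r b with hrlt | hrge
  · have := dSeq_formula ha k r (by omega) (by omega)
    have hidx : nseq a k - 1 + (r - 1) = n := by omega
    rwa [hidx] at this
  · have hreq : r = b := by omega
    have hb2' := ratios_ge_two ha (k+1)
    have := dSeq_formula ha (k+1) 1 (le_refl 1) (by omega)
    have hidx : nseq a (k+1) - 1 + (1 - 1) = n := by omega
    rw [hidx] at this
    rw [this, one_mul, a_mul ha k, hreq]
    ring


open scoped Classical

/-- counting function -/
def cnt (X : Set ℕ) (N : ℕ) : ℕ := ((Finset.range N).filter (· ∈ X)).card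

lemma cnt_le (X : Set ℕ) (N : ℕ) : cnt X N ≤ N := by
  calc cnt X N ≤ (Finset.range N).card := Finset.card_filter_le _ _
  _ = N := Finset.card_range N

lemma cnt_mono (X : Set ℕ) {N₁ N₂ : ℕ} (h : N₁ ≤ N₂) : cnt X N₁ ≤ cnt X N₂ := by
  apply Finset.card_le_card
  apply Finset.filter_subset_filter
  intro m hm
  simp only [Finset.mem_range] at hm ⊢
  omega

lemma cnt_split (X : Set ℕ) {N₁ N₂ : ℕ} (h : N₁ ≤ N₂) :
    cnt X N₂ = cnt X N₁ + ((Finset.Ico N₁ N₂).filter (· ∈ X)).card := by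
  unfold cnt
  have hsplit : Finset.range N₂ = Finset.range N₁ ∪ Finset.Ico N₁ N₂ := by
    ext m
    simp only [Finset.mem_range, Finset.mem_union, Finset.mem_Ico]
    omega
  have hdisj : Disjoint ((Finset.range N₁).filter (· ∈ X))
      ((Finset.Ico N₁ N₂).filter (· ∈ X)) := by
    apply Finset.disjoint_filter_filter
    rw [Finset.disjoint_left]
    intro m hm hm'
    simp only [Finset.mem_range] at hm
    simp only [Finset.mem_Ico] at hm'
    omega
  rw [hsplit, Finset.filter_union, Finset.card_union_of_disjoint hdisj]

lemma ncard_eq_cnt (X : Set ℕ) (N : ℕ) : (X ∩ Set.Iio N).ncard = cnt X N := by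
  unfold cnt
  rw [← Set.ncard_coe_finset]
  congr 1
  ext m
  simp only [Finset.coe_filter, Finset.mem_range, Set.mem_setOf_eq, Set.mem_inter_iff,
    Set.mem_Iio]
  tauto

section withA
variable (A : Set ℕ)

lemma mem_liftSet_iff (hA1 : ∀ j ∈ A, 1 ≤ j) (ha : IsArithSeq a) (K m : ℕ)
    (hm1 : nseq a K ≤ m) (hm2 : m < nseq a (K+1)) :
    m ∈ liftSet a A ↔ K+1 ∈ A := by
  constructor
  · rintro hm
    simp only [liftSet, Set.mem_iUnion, Set.mem_Icc] at hm
    obtain ⟨j, hjA, hj1, hj2⟩ := hm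
    have hj := hA1 j hjA
    have hmono := nseq_strictMono ha
    have hjj : j = K + 1 := by
      by_contra hne
      rcases Nat.lt_or_ge j (K+1) with h | h
      · -- j ≤ K : nseq a j ≤ nseq a K
        have h1 : nseq a j ≤ nseq a K := hmono.monotone (by omega)
        have := nseq_one_le (a := a) j
        omega
      · -- j ≥ K+2 : nseq a (j-1) ≥ nseq a (K+1)
        have h1 : nseq a (K+1) ≤ nseq a (j-1) := hmono.monotone (by omega)
        omega
    rwa [hjj] at hjA
  · intro hK
    simp only [liftSet, Set.mem_iUnion, Set.mem_Icc]
    refine ⟨K+1, hK, ?_, ?_⟩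
    · exact hm1
    · omega

lemma liftSet_ge_one (m : ℕ) (hm : m ∈ liftSet a A) : 1 ≤ m := by
  simp only [liftSet, Set.mem_iUnion, Set.mem_Icc] at hm
  obtain ⟨j, hjA, hj1, hj2⟩ := hm
  have := nseq_one_le (a := a) (j-1)
  omega

lemma cnt_liftSet_Ico (hA1 : ∀ j ∈ A, 1 ≤ j) (ha : IsArithSeq a) (K N : ℕ)
    (h1 : nseq a K ≤ N) (h2 : N ≤ nseq a (K+1)) :
    ((Finset.Ico (nseq a K) N).filter (· ∈ liftSet a A)).card
      = if K+1 ∈ A then N - nseq a K else 0 := by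
  by_cases hK : K+1 ∈ A
  · rw [if_pos hK]
    have : (Finset.Ico (nseq a K) N).filter (· ∈ liftSet a A) = Finset.Ico (nseq a K) N := by
      apply Finset.filter_true_of_mem
      intro m hm
      simp only [Finset.mem_Ico] at hm
      exact (mem_liftSet_iff A hA1 ha K m hm.1 (by omega)).2 hK
    rw [this, Nat.card_Ico]
  · rw [if_neg hK]
    rw [Finset.card_eq_zero, Finset.filter_eq_empty_iff]
    intro m hm
    simp only [Finset.mem_Ico] at hm
    intro hmem
    exact hK ((mem_liftSet_iff A hA1 ha K m hm.1 (by omega)).1 hmem)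

/-- cumulative count comparison -/
lemma main_count (hA1 : ∀ j ∈ A, 1 ≤ j) (ha : IsArithSeq a) (S : Set ℕ)
    (hblock : ∀ K, K+1 ∈ A → ((ratios a (K+1) : ℝ) - 1)
      ≤ 16 * (((Finset.Ico (nseq a K) (nseq a (K+1))).filter (· ∈ S)).card : ℝ)) :
    ∀ K, (cnt (liftSet a A) (nseq a K) : ℝ) ≤ 16 * cnt S (nseq a K) := by
  intro K
  induction K with
  | zero =>
    have : cnt (liftSet a A) (nseq a 0) = 0 := by
      unfold cnt
      rw [Finset.card_eq_zero, Finset.filter_eq_empty_iff]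
      intro m hm
      simp only [Finset.mem_range] at hm
      intro hmem
      have h1 := liftSet_ge_one A m hmem
      have h0 : nseq a 0 = 1 := rfl
      omega
    rw [this]
    push_cast
    positivity
  | succ K ih =>
    have hmono := (nseq_strictMono ha).monotone (show K ≤ K+1 by omega)
    have hL := cnt_split (liftSet a A) hmono
    have hS := cnt_split S hmono
    have hLI := cnt_liftSet_Ico A hA1 ha K (nseq a (K+1)) hmono (le_refl _)
    have hb2 := ratios_ge_two ha K
    have hnseq : nseq a (K+1) = nseq a K + (ratios a (K+1) - 1) := rfl
    by_cases hK : K+1 ∈ A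
    · rw [if_pos hK] at hLI
      rw [hL, hLI, hS]
      have hgood := hblock K hK
      have hbm : nseq a (K+1) - nseq a K = ratios a (K+1) - 1 := by omega
      rw [hbm]
      push_cast [Nat.cast_sub (show 1 ≤ ratios a (K+1) by omega)]
      linarith
    · rw [if_neg hK] at hLI
      rw [hL, hLI]
      have hSc : (0:ℕ) ≤ ((Finset.Ico (nseq a K) (nseq a (K+1))).filter (· ∈ S)).card :=
        Nat.zero_le _
      rw [hS]
      push_cast
      have : (0:ℝ) ≤ (((Finset.Ico (nseq a K) (nseq a (K+1))).filter (· ∈ S)).card : ℝ) := by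
        positivity
      linarith

/-- push to block boundary -/
lemma push_lemma (hA1 : ∀ j ∈ A, 1 ≤ j) (ha : IsArithSeq a) (N : ℕ) (hN : 1 ≤ N) :
    ∃ K, (cnt (liftSet a A) N : ℝ)/N ≤ (cnt (liftSet a A) (nseq a K) : ℝ)/(nseq a K)
      ∧ cnt (liftSet a A) N ≤ cnt (liftSet a A) (nseq a K) := by
  set K := Nat.findGreatest (fun k => nseq a k ≤ N) N with hKdef
  have hK1 : nseq a K ≤ N := by
    have h0 : (fun k => nseq a k ≤ N) 0 := by
      show nseq a 0 ≤ N
      have : nseq a 0 = 1 := rfl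
      omega
    exact Nat.findGreatest_spec (P := fun k => nseq a k ≤ N) (Nat.zero_le N) h0
  have hK2 : N < nseq a (K+1) := by
    by_contra hc
    push_neg at hc
    have hKN : K + 1 ≤ N := by
      have := nseq_ge ha (K+1)
      omega
    have := Nat.le_findGreatest (P := fun k => nseq a k ≤ N) hKN hc
    omega
  have hNpos : (0:ℝ) < N := by exact_mod_cast hN
  have hnK1 := nseq_one_le (a := a) K
  have hnKpos : (0:ℝ) < (nseq a K : ℝ) := by
    have h : (0:ℕ) < nseq a K := hnK1
    exact_mod_cast h
  have hmonoK := (nseq_strictMono ha).monotone (show K ≤ K+1 by omega)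
  have hsplitN := cnt_split (liftSet a A) hK1
  have hIN := cnt_liftSet_Ico A hA1 ha K N hK1 (by omega)
  by_cases hK : K+1 ∈ A
  · -- push up to nseq a (K+1)
    rw [if_pos hK] at hIN
    have hNval : cnt (liftSet a A) N = cnt (liftSet a A) (nseq a K) + (N - nseq a K) := by
      rw [hsplitN, hIN]
    have hsplitK := cnt_split (liftSet a A) hmonoK
    have hIK := cnt_liftSet_Ico A hA1 ha K (nseq a (K+1)) hmonoK (le_refl _)
    rw [if_pos hK] at hIK
    have hKval : cnt (liftSet a A) (nseq a (K+1))
        = cnt (liftSet a A) (nseq a K) + (nseq a (K+1) - nseq a K) := by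
      rw [hsplitK, hIK]
    refine ⟨K+1, ?_, ?_⟩
    · have hCN : cnt (liftSet a A) N ≤ N := cnt_le _ _
      have hnn : (0:ℝ) < (nseq a (K+1) : ℝ) := by
        have h := nseq_one_le (a := a) (K+1)
        have h2 : (0:ℕ) < nseq a (K+1) := h
        exact_mod_cast h2
      rw [div_le_div_iff₀ hNpos hnn]
      have hCR : (cnt (liftSet a A) (nseq a (K+1)) : ℝ)
          = (cnt (liftSet a A) N : ℝ) + ((nseq a (K+1) : ℝ) - (N : ℝ)) := by
        rw [hKval, hNval]
        push_cast [Nat.cast_sub hmonoK, Nat.cast_sub hK1]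
        ring
      rw [hCR]
      have hCNR : (cnt (liftSet a A) N : ℝ) ≤ (N:ℝ) := by exact_mod_cast hCN
      have hNleR : (N:ℝ) ≤ (nseq a (K+1) : ℝ) := by
        have : N ≤ nseq a (K+1) := by omega
        exact_mod_cast this
      nlinarith
    · exact cnt_mono _ (by omega)
  · -- equal at nseq a K
    rw [if_neg hK] at hIN
    have hNval : cnt (liftSet a A) N = cnt (liftSet a A) (nseq a K) := by
      rw [hsplitN, hIN]
      omega
    refine ⟨K, ?_, ?_⟩
    · rw [hNval]
      apply div_le_div_of_nonneg_left _ hnKpos _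
      · positivity
      · exact_mod_cast hK1
    · omega

end withA
end Aux

/-- if `supp x` is co-finite and `d̄(L(supp x \ supp_q x)) > 0`, then
`x ∉ t^s_{(d n)}(𝕋)`. Here `x` is given via its canonical digits `c`. -/
theorem not_mem_statChar_of_cofinite_supp (a : ℕ → ℕ) (ha : IsArithSeq a) (c : ℕ → ℕ)
    (hc0 : c 0 = 0) (hcle : ∀ n, 1 ≤ n → c n ≤ ratios a n - 1)
    (hcanon : {n : ℕ | 1 ≤ n ∧ c n < ratios a n - 1}.Infinite)
    (x : AddCircle (1 : ℝ))
    (hx : x = ((∑' n : ℕ, (c n : ℝ) / (a n : ℝ) : ℝ) : AddCircle (1 : ℝ)))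
    (hcof : {n : ℕ | 1 ≤ n ∧ c n = 0}.Finite)
    (hud : 0 < upperDensity (liftSet a ({n | c n ≠ 0} \ {n | c n = ratios a n - 1}))) :
    x ∉ statChar (fun n => (dSeq a n : ℤ)) := by
  subst hx
  intro hmem
  classical
  simp only [statChar, Set.mem_setOf_eq] at hmem
  set A : Set ℕ := {n | c n ≠ 0} \ {n | c n = ratios a n - 1} with hAdef
  have hA1 : ∀ j ∈ A, 1 ≤ j := by
    intro j hj
    simp only [hAdef, Set.mem_diff, Set.mem_setOf_eq] at hj
    rcases Nat.eq_zero_or_pos j with rfl | h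
    · exact absurd hc0 hj.1
    · exact h
  set S : Set ℕ := {n : ℕ | (1:ℝ)/16 ≤
      ‖(dSeq a n : ℤ) • ((∑' n : ℕ, (c n : ℝ) / (a n : ℝ) : ℝ) : AddCircle (1 : ℝ))‖} with hSdef
  have hS : HasDensity S 0 := by
    have := hmem (1/16) (by norm_num)
    exact this
  -- the per-block good counting
  have hblock : ∀ K, K+1 ∈ A → ((ratios a (K+1) : ℝ) - 1)
      ≤ 16 * (((Finset.Ico (nseq a K) (nseq a (K+1))).filter (· ∈ S)).card : ℝ) := by
    intro K hK
    have hKA : c (K+1) ≠ 0 ∧ c (K+1) ≠ ratios a (K+1) - 1 := by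
      simpa [hAdef, Set.mem_diff, Set.mem_setOf_eq] using hK
    have hb2 := Aux.ratios_ge_two ha K
    have hc1 : 1 ≤ c (K+1) := by omega
    have hcle' := hcle (K+1) (by omega)
    have hc2 : c (K+1) ≤ ratios a (K+1) - 2 := by omega
    have hb3 : 3 ≤ ratios a (K+1) := by omega
    obtain ⟨hy1, hy2⟩ := Aux.T_bounds ha hc0 hcle K hc1 hc2
    obtain ⟨M, hM⟩ := Aux.exists_int_rep ha hc0 hcle K
    set y := (a K : ℝ) * ∑' n : ℕ, (c (n + (K+1)) : ℝ) / a (n + (K+1)) with hydef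
    have hcount := Aux.count_good (ratios a (K+1)) hb3 y hy1 hy2
    have hinj : (((Finset.Icc 2 (ratios a (K+1))).filter
          (fun r : ℕ => 1/16 ≤ ‖(((r : ℝ) * y : ℝ) : AddCircle (1:ℝ))‖)).card : ℝ)
        ≤ (((Finset.Ico (nseq a K) (nseq a (K+1))).filter (· ∈ S)).card : ℝ) := by
      have hle : ((Finset.Icc 2 (ratios a (K+1))).filter
          (fun r : ℕ => 1/16 ≤ ‖(((r : ℝ) * y : ℝ) : AddCircle (1:ℝ))‖)).card
          ≤ ((Finset.Ico (nseq a K) (nseq a (K+1))).filter (· ∈ S)).card := by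
        apply Finset.card_le_card_of_injOn (fun r => nseq a K + (r - 2))
        · intro r hr
          simp only [Finset.mem_coe, Finset.mem_filter, Finset.mem_Icc] at hr
          obtain ⟨⟨hr2, hrb⟩, hgood⟩ := hr
          have hn1 := Aux.nseq_one_le (a := a) K
          have hnseq : nseq a (K+1) = nseq a K + (ratios a (K+1) - 1) := rfl
          simp only [Finset.mem_coe, Finset.mem_filter, Finset.mem_Ico]
          refine ⟨⟨by omega, by omega⟩, ?_⟩
          obtain ⟨r', hr'2, hr'b, hr'eq, hr'd⟩ := Aux.dSeq_block ha (K+1)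
            (nseq a K + (r - 2)) (by omega)
            (by simp only [Nat.add_sub_cancel]; omega) (by omega)
          simp only [Nat.add_sub_cancel] at hr'eq hr'd
          have hrr : r' = r := by omega
          rw [hSdef]
          simp only [Set.mem_setOf_eq]
          have hds : dSeq a (nseq a K + (r - 2)) = r * a K := by rw [hr'd, hrr]
          have hkey : ((dSeq a (nseq a K + (r - 2)) : ℤ) •
              ((∑' n : ℕ, (c n : ℝ) / (a n : ℝ) : ℝ) : AddCircle (1 : ℝ)))
              = (((r : ℝ) * y : ℝ) : AddCircle (1:ℝ)) := by
            rw [← AddCircle.coe_zsmul]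
            have h1 : (dSeq a (nseq a K + (r - 2)) : ℤ) • (∑' n : ℕ, (c n : ℝ) / (a n : ℝ))
                = ((dSeq a (nseq a K + (r - 2)) : ℕ) : ℝ) * (∑' n : ℕ, (c n : ℝ) / (a n : ℝ)) := by
              rw [zsmul_eq_mul]
              push_cast
              ring
            rw [h1, hds]
            have h2 : ((r * a K : ℕ) : ℝ) * (∑' n : ℕ, (c n : ℝ) / (a n : ℝ))
                = (r:ℝ) * ((a K : ℝ) * (∑' n : ℕ, (c n : ℝ) / (a n : ℝ))) := by
              push_cast
              ring
            rw [h2, hM]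
            have h3 : (r:ℝ) * ((M:ℝ) + y) = ((r * M : ℤ) : ℝ) + (r:ℝ) * y := by
              push_cast
              ring
            rw [h3, AddCircle.coe_add, Aux.intCoe_zero, zero_add]
          rw [hkey]
          exact hgood
        · intro r₁ h₁ r₂ h₂ h
          simp only [Finset.mem_coe, Finset.mem_filter, Finset.mem_Icc] at h₁ h₂
          simp only at h
          omega
      exact_mod_cast hle
    linarith
  have hmain := Aux.main_count A hA1 ha S hblock
  -- analysis: contradiction with positive upper density
  set δ := upperDensity (liftSet a A) with hδdef
  have hδ : 0 < δ := hud
  have hcob : IsCoboundedUnder (· ≤ ·) atTop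
      (fun N : ℕ => (((liftSet a A) ∩ Set.Iio N).ncard : ℝ)/N) :=
    Filter.isCoboundedUnder_le_of_le atTop (x := 0) (fun N => by positivity)
  have hfreq : ∃ᶠ N in atTop, δ/2 < (((liftSet a A) ∩ Set.Iio N).ncard : ℝ)/N := by
    apply Filter.frequently_lt_of_lt_limsup hcob
    have hδeq : δ = limsup (fun n : ℕ => (((liftSet a A) ∩ Set.Iio n).ncard : ℝ)/n) atTop := rfl
    rw [← hδeq]
    linarith
  have hev : ∀ᶠ N in atTop, ((S ∩ Set.Iio N).ncard : ℝ)/N < δ/32 := by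
    apply Tendsto.eventually_lt_const (by positivity : (0:ℝ) < δ/32) hS
  obtain ⟨M₀, hM₀⟩ := eventually_atTop.1 hev
  obtain ⟨M₁, hM₁⟩ := exists_nat_ge (2 * M₀ / δ)
  obtain ⟨N, hNge, hNbig⟩ := Filter.frequently_atTop.1 hfreq (max (M₁+1) 1)
  have hN1 : 1 ≤ N := le_trans (le_max_right _ _) hNge
  have hNM : M₁ + 1 ≤ N := le_trans (le_max_left _ _) hNge
  obtain ⟨K, hK1, hK2⟩ := Aux.push_lemma A hA1 ha N hN1
  have hNpos : (0:ℝ) < N := by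
    have : (0:ℕ) < N := hN1
    exact_mod_cast this
  have hnK1 := Aux.nseq_one_le (a := a) K
  have hnKpos : (0:ℝ) < (nseq a K : ℝ) := by
    have h : (0:ℕ) < nseq a K := hnK1
    exact_mod_cast h
  -- translate ncard to cnt in hNbig
  rw [Aux.ncard_eq_cnt] at hNbig
  -- chain of inequalities
  have hchain : δ/2 < (Aux.cnt (liftSet a A) (nseq a K) : ℝ)/(nseq a K) :=
    lt_of_lt_of_le hNbig hK1
  have hKbound := hmain K
  have hSgood : δ/32 < (Aux.cnt S (nseq a K) : ℝ)/(nseq a K) := by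
    have h16 : (Aux.cnt (liftSet a A) (nseq a K) : ℝ)/(nseq a K)
        ≤ 16 * ((Aux.cnt S (nseq a K) : ℝ)/(nseq a K)) := by
      rw [← mul_div_assoc]
      exact (div_le_div_iff_of_pos_right hnKpos).2 hKbound
    linarith
  -- nseq a K is large
  have hnKM : M₀ ≤ nseq a K := by
    have hcntN : (δ/2) * N < (Aux.cnt (liftSet a A) N : ℝ) := by
      rw [lt_div_iff₀ hNpos] at hNbig
      linarith [hNbig]
    have hle1 : (Aux.cnt (liftSet a A) N : ℝ) ≤ (Aux.cnt (liftSet a A) (nseq a K) : ℝ) := by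
      exact_mod_cast hK2
    have hle2 : (Aux.cnt (liftSet a A) (nseq a K) : ℝ) ≤ (nseq a K : ℝ) := by
      have := Aux.cnt_le (liftSet a A) (nseq a K)
      exact_mod_cast this
    have hM₀N : (M₀ : ℝ) ≤ (δ/2) * N := by
      have hM1N : (M₁ : ℝ) + 1 ≤ (N:ℝ) := by exact_mod_cast hNM
      have : 2 * M₀ / δ ≤ (M₁ : ℝ) := hM₁
      have h2 : (2 * M₀ : ℝ) ≤ δ * M₁ := by
        rw [div_le_iff₀ hδ] at this
        linarith [this]
      nlinarith
    have : (M₀ : ℝ) ≤ (nseq a K : ℝ) := by linarith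
    exact_mod_cast this
  have hcontra := hM₀ (nseq a K) hnKM
  rw [Aux.ncard_eq_cnt] at hcontra
  linarith
end
end

section
/- If (a_n) is a strongly non density lifting invariant (strongly non dli) arithmetic sequence, then t^s_{(d_n)}(T) = t_{(d_n)}(T). -/
set_option maxHeartbeats 1000000


open Filter Topology Set

noncomputable section

section basics
variable {a : ℕ → ℕ}

lemma aSM (ha : IsArithSeq a) : StrictMono a := strictMono_nat_of_lt_succ ha.2.1

lemma a_pos (ha : IsArithSeq a) (k : ℕ) : 0 < a k := by
  have := (aSM ha).monotone (Nat.zero_le k)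
  have h0 := ha.1
  omega
  
lemma ratios_spec (ha : IsArithSeq a) (k : ℕ) : a (k+1) = ratios a (k+1) * a k := by
  have h := ha.2.2 k
  have : a (k+1) / a k * a k = a (k+1) := Nat.div_mul_cancel h
  simpa [ratios] using this.symm

lemma ratios_ge_two (ha : IsArithSeq a) (k : ℕ) : 2 ≤ ratios a (k+1) := by
  have h := ratios_spec ha k
  have h2 := ha.2.1 k
  have hp := a_pos ha k
  nlinarith [Nat.lt_irrefl (a k)]

lemma nseq_succ (k : ℕ) : nseq a (k+1) = nseq a k + (ratios a (k+1) - 1) := rfl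

lemma nseqSM (ha : IsArithSeq a) : StrictMono (nseq a) := by
  apply strictMono_nat_of_lt_succ
  intro k
  have := ratios_ge_two ha k
  have : 1 ≤ ratios a (k+1) - 1 := by omega
  rw [nseq_succ]; omega

lemma nseq_ge (ha : IsArithSeq a) (k : ℕ) : k + 1 ≤ nseq a k := by
  induction k with
  | zero => simp [nseq]
  | succ n ih =>
    have h := nseqSM ha (Nat.lt_succ_self n)
    simp only [Nat.succ_eq_add_one] at *
    omega
end basics

/-- index of current block -/
def Kfun (a : ℕ → ℕ) (n : ℕ) : ℕ := Nat.findGreatest (fun k => nseq a k ≤ n + 1) n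

/-- explicit enumeration -/
def eSeq (a : ℕ → ℕ) (n : ℕ) : ℕ := (n + 2 - nseq a (Kfun a n)) * a (Kfun a n)

section enum
variable {a : ℕ → ℕ}

lemma K_le (ha : IsArithSeq a) (n : ℕ) : nseq a (Kfun a n) ≤ n + 1 := by
  classical
  have h0 : nseq a 0 ≤ n + 1 := by simp [nseq]
  exact Nat.findGreatest_spec (P := fun k => nseq a k ≤ n + 1) (Nat.zero_le n) h0

lemma K_lt (ha : IsArithSeq a) (n : ℕ) : n + 1 < nseq a (Kfun a n + 1) := by
  classical
  by_cases hk : Kfun a n + 1 ≤ n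
  · have := Nat.findGreatest_is_greatest (P := fun k => nseq a k ≤ n + 1)
      (k := Kfun a n + 1) (Nat.lt_succ_self _) hk
    simp only [Kfun] at *
    omega
  · have := nseq_ge ha (Kfun a n + 1)
    omega

/-- characterization of Kfun -/
lemma K_eq (ha : IsArithSeq a) {n k : ℕ} (h1 : nseq a k ≤ n + 1) (h2 : n + 1 < nseq a (k+1)) :
    Kfun a n = k := by
  have hK1 := K_le ha n
  have hK2 := K_lt ha n
  by_contra hne
  rcases Nat.lt_or_ge (Kfun a n) k with h | h
  · have : Kfun a n + 1 ≤ k := h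
    have := (nseqSM ha).monotone this
    omega
  · have : k + 1 ≤ Kfun a n := by omega
    have := (nseqSM ha).monotone this
    omega

lemma e_block (ha : IsArithSeq a) {k r : ℕ} (h1 : 1 ≤ r) (h2 : r < ratios a (k+1)) :
    eSeq a (nseq a k - 1 + (r - 1)) = r * a k := by
  have hg := nseq_ge ha k
  set n := nseq a k - 1 + (r - 1) with hn
  have hn1 : n + 1 = nseq a k + (r - 1) := by omega
  have hK : Kfun a n = k := by
    apply K_eq ha
    · omega
    · rw [nseq_succ]
      have := ratios_ge_two ha k
      omega
  rw [eSeq, hK]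
  congr 1
  omega
end enum

section enum2
variable {a : ℕ → ℕ}

def pD (a : ℕ → ℕ) : ℕ → Prop :=
  fun m => ∃ k r : ℕ, 1 ≤ r ∧ r < ratios a (k + 1) ∧ m = r * a k

lemma e_mem (ha : IsArithSeq a) (n : ℕ) : pD a (eSeq a n) := by
  refine ⟨Kfun a n, n + 2 - nseq a (Kfun a n), ?_, ?_, rfl⟩
  · have := K_le ha n; omega
  · have h1 := K_lt ha n
    have h2 := nseq_succ (a := a) (Kfun a n)
    have h3 := ratios_ge_two ha (Kfun a n)
    have h4 := K_le ha n
    omega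

lemma e_surj (ha : IsArithSeq a) {m : ℕ} (hm : pD a m) : ∃ n, eSeq a n = m := by
  obtain ⟨k, r, h1, h2, rfl⟩ := hm
  exact ⟨nseq a k - 1 + (r - 1), e_block ha h1 h2⟩

lemma eSM (ha : IsArithSeq a) : StrictMono (eSeq a) := by
  apply strictMono_nat_of_lt_succ
  intro n
  have hKle := K_le ha n
  have hKlt := K_lt ha n
  have hg := nseq_ge ha (Kfun a n)
  have hrat := ratios_ge_two ha (Kfun a n)
  have hap := a_pos ha (Kfun a n)
  by_cases hc : nseq a (Kfun a n + 1) ≤ n + 2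
  · have hK' : Kfun a (n+1) = Kfun a n + 1 := by
      apply K_eq ha hc
      have hmono := nseqSM ha (Nat.lt_succ_self (Kfun a n + 1))
      simp only [Nat.succ_eq_add_one] at hmono
      omega
    have heq : nseq a (Kfun a n + 1) = n + 2 := by omega
    have hsucc := nseq_succ (a := a) (Kfun a n)
    rw [eSeq, eSeq, hK', heq]
    have hrle : n + 2 - nseq a (Kfun a n) ≤ ratios a (Kfun a n + 1) - 1 := by omega
    calc (n + 2 - nseq a (Kfun a n)) * a (Kfun a n)
        ≤ (ratios a (Kfun a n + 1) - 1) * a (Kfun a n) :=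
          Nat.mul_le_mul_right _ hrle
      _ < ratios a (Kfun a n + 1) * a (Kfun a n) := by
          apply Nat.mul_lt_mul_of_lt_of_le (by omega) (le_refl _)
          omega
      _ = a (Kfun a n + 1) := (ratios_spec ha (Kfun a n)).symm
      _ = (n + 1 + 2 - (n + 2)) * a (Kfun a n + 1) := by simp
  · have hK' : Kfun a (n+1) = Kfun a n := by
      apply K_eq ha (by omega) (by omega)
    rw [eSeq, eSeq, hK']
    apply Nat.mul_lt_mul_of_lt_of_le (by omega) (le_refl _)
    omega

lemma dSeq_eq_eSeq (ha : IsArithSeq a) : (Nat.nth (pD a)) = eSeq a := by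
  classical
  funext n
  have hmem := e_mem ha n
  have hcount : Nat.count (pD a) (eSeq a n) = n := by
    rw [Nat.count_eq_card_filter_range]
    have hset : (Finset.range (eSeq a n)).filter (pD a) = (Finset.range n).image (eSeq a) := by
      ext m
      simp only [Finset.mem_filter, Finset.mem_range, Finset.mem_image]
      constructor
      · rintro ⟨hlt, hp⟩
        obtain ⟨i, rfl⟩ := e_surj ha hp
        exact ⟨i, (eSM ha).lt_iff_lt.mp hlt, rfl⟩
      · rintro ⟨i, hi, rfl⟩
        exact ⟨(eSM ha) hi, e_mem ha i⟩
    rw [hset, Finset.card_image_of_injective _ (eSM ha).injective, Finset.card_range]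
  have := Nat.nth_count (p := pD a) hmem
  rw [hcount] at this
  exact this
end enum2

section blocks
variable {a : ℕ → ℕ}

lemma e_block2 (ha : IsArithSeq a) {k r : ℕ} (h2 : 2 ≤ r) (hr : r ≤ ratios a (k+1)) :
    eSeq a (nseq a k + (r - 2)) = r * a k := by
  have hg := nseq_ge ha k
  have hb := ratios_ge_two ha k
  rcases lt_or_eq_of_le hr with hlt | heq
  · have := e_block ha (k := k) (r := r) (by omega) hlt
    have hidx : nseq a k - 1 + (r - 1) = nseq a k + (r - 2) := by omega
    rwa [hidx] at this
  · have h1 := e_block ha (k := k+1) (r := 1) le_rfl (by have := ratios_ge_two ha (k+1); omega)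
    have hsucc := nseq_succ (a := a) k
    have hg1 := nseq_ge ha (k+1)
    have hidx : nseq a (k+1) - 1 + (1 - 1) = nseq a k + (r - 2) := by omega
    rw [hidx] at h1
    rw [h1, one_mul, ratios_spec ha k, heq]

lemma block_val (ha : IsArithSeq a) {k n : ℕ} (hn : n ∈ Set.Icc (nseq a k) (nseq a (k+1) - 1)) :
    ∃ r, 2 ≤ r ∧ r ≤ ratios a (k+1) ∧ n = nseq a k + (r - 2) ∧ eSeq a n = r * a k := by
  obtain ⟨hlo, hhi⟩ := hn
  have hg := nseq_ge ha k
  have hb := ratios_ge_two ha k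
  have hsucc := nseq_succ (a := a) k
  refine ⟨n + 2 - nseq a k, by omega, by omega, by omega, ?_⟩
  have := e_block2 ha (k := k) (r := n + 2 - nseq a k) (by omega) (by omega)
  have hidx : nseq a k + (n + 2 - nseq a k - 2) = n := by omega
  rwa [hidx] at this
end blocks

section circle

lemma norm_coe_abs {t : ℝ} (h : |t| ≤ 1/2) : ‖(t : AddCircle (1:ℝ))‖ = |t| := by
  rw [AddCircle.norm_eq]
  simp only [inv_one, one_mul, mul_one]
  rcases lt_or_eq_of_le (abs_le.mp h).2 with hlt | heq
  · have hr : round t = 0 := by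
      rw [round_eq]
      have := (abs_le.mp h).1
      rw [Int.floor_eq_zero_iff]
      constructor <;> [linarith; simpa using by linarith]
    rw [hr]
    simp
  · have hr : round t = 1 := by
      rw [round_eq, heq]
      norm_num
    rw [hr, heq]
    norm_num

lemma rep_lemma (y : AddCircle (1:ℝ)) :
    ∃ α : ℝ, |α| = ‖y‖ ∧ ∀ j : ℕ, (j:ℝ) * |α| ≤ 1/2 → ‖(j • y)‖ = j * |α| := by
  obtain ⟨x, rfl⟩ := QuotientAddGroup.mk_surjective y
  set α := x - round x with hα
  have habs : |α| ≤ 1/2 := abs_sub_round x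
  have hcoe : ∀ j : ℕ, (j • ((x : ℝ) : AddCircle (1:ℝ))) = ((j * α : ℝ) : AddCircle (1:ℝ)) := by
    intro j
    rw [← AddCircle.coe_nsmul, nsmul_eq_mul]
    have : (j * x : ℝ) - j * α = ((j * round x : ℤ) : ℝ) := by push_cast [hα]; ring
    rw [show (j * x : ℝ) = j * α + ((j * round x : ℤ) : ℝ) by linarith]
    rw [QuotientAddGroup.mk_add]
    have hz : (((j * round x : ℤ) : ℝ) : AddCircle (1:ℝ)) = 0 := by
      rw [AddCircle.coe_eq_zero_iff]
      exact ⟨j * round x, by simp⟩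
    rw [hz, add_zero]
  refine ⟨α, ?_, ?_⟩
  · rw [show ((x : ℝ) : AddCircle (1:ℝ)) = ((α : ℝ) : AddCircle (1:ℝ)) by
        simpa [one_smul] using (hcoe 1), norm_coe_abs habs]
  · intro j hj
    rw [hcoe j]
    have h1 : |(j:ℝ) * α| = (j:ℝ) * |α| := by
      rw [abs_mul, abs_of_nonneg (by positivity : (0:ℝ) ≤ (j:ℝ))]
    rw [norm_coe_abs (by rw [h1]; exact hj), h1]

end circle

section count

lemma blockCount (y : AddCircle (1:ℝ)) {b r₀ : ℕ} {ε : ℝ} (hε : 0 < ε) (hε8 : ε ≤ 1/8)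
    (hb : 2 ≤ b) (h1 : 1 ≤ r₀) (h2 : r₀ ≤ b) (h3 : ε ≤ ‖(r₀ • y)‖) :
    (b : ℝ)/4 - 1 ≤ (((Finset.Icc 1 b).filter (fun r => ε/2 ≤ ‖r • y‖)).card : ℝ) := by
  classical
  set S := (Finset.Icc 1 b).filter (fun r => ε/2 ≤ ‖r • y‖) with hS
  set T := (Finset.Icc 1 b).filter (fun r => ε ≤ ‖r • y‖) with hT
  have hTne : T.Nonempty := ⟨r₀, by simp only [hT, Finset.mem_filter, Finset.mem_Icc]; exact ⟨⟨h1, h2⟩, h3⟩⟩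
  set s := T.min' hTne with hs
  have hsT : s ∈ T := T.min'_mem hTne
  rw [hT, Finset.mem_filter, Finset.mem_Icc] at hsT
  obtain ⟨⟨hs1, hsb⟩, hsnorm⟩ := hsT
  have hmin : ∀ r, 1 ≤ r → r < s → ‖(r • y)‖ < ε := by
    intro r hr1 hrs
    by_contra hcon
    push_neg at hcon
    have hrT : r ∈ T := by
      rw [hT, Finset.mem_filter, Finset.mem_Icc]
      exact ⟨⟨hr1, le_trans (le_of_lt hrs) hsb⟩, hcon⟩
    have := T.min'_le r hrT
    omega
  by_cases hcase : 2 * s ≤ b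
  · -- pairing case
    set φ : ℕ → ℕ := fun r => if ε/2 ≤ ‖r • y‖ then r else r + s with hφ
    have himg : ∀ r ∈ Finset.Icc 1 (b - s), φ r ∈ S := by
      intro r hr
      rw [Finset.mem_Icc] at hr
      by_cases hc : ε/2 ≤ ‖(r • y)‖
      · simp only [hφ, if_pos hc, hS, Finset.mem_filter, Finset.mem_Icc]
        exact ⟨⟨hr.1, by omega⟩, hc⟩
      · push_neg at hc
        have hdec : (r + s) • y - r • y = s • y := by rw [add_nsmul]; abel
        have htri : ‖s • y‖ ≤ ‖(r+s) • y‖ + ‖r • y‖ := by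
          rw [← hdec]; exact norm_sub_le _ _
        simp only [hφ, if_neg (not_le.mpr hc), hS, Finset.mem_filter, Finset.mem_Icc]
        refine ⟨⟨by omega, by omega⟩, by linarith⟩
    have hfib : ∀ m ∈ (Finset.Icc 1 (b - s)).image φ,
        ((Finset.Icc 1 (b - s)).filter (fun x => φ x = m)).card ≤ 2 := by
      intro m _
      have hsub : (Finset.Icc 1 (b - s)).filter (fun x => φ x = m) ⊆ {m, m - s} := by
        intro x hx
        rw [Finset.mem_filter] at hx
        have : φ x = x ∨ φ x = x + s := by
          simp only [hφ]; split <;> simp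
        rcases this with h | h <;> rw [hx.2] at h <;>
          simp only [Finset.mem_insert, Finset.mem_singleton] <;> omega
      calc _ ≤ ({m, m - s} : Finset ℕ).card := Finset.card_le_card hsub
        _ ≤ 2 := Finset.card_insert_le _ _ |>.trans (by simp)
    have hcard1 : (Finset.Icc 1 (b - s)).card ≤ 2 * ((Finset.Icc 1 (b - s)).image φ).card :=
      Finset.card_le_mul_card_image _ 2 hfib
    have hcard2 : ((Finset.Icc 1 (b - s)).image φ).card ≤ S.card := by
      apply Finset.card_le_card
      intro m hm
      obtain ⟨r, hr, rfl⟩ := Finset.mem_image.mp hm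
      exact himg r hr
    have hIcc : (Finset.Icc 1 (b - s)).card = b - s := by
      rw [Nat.card_Icc]; omega
    have hnat : b ≤ 4 * S.card := by omega
    have := Nat.cast_le (α := ℝ) |>.mpr hnat
    push_cast at this
    linarith
  · push_neg at hcase
    obtain ⟨α, hα, hrep⟩ := rep_lemma y
    have hs2 : 2 ≤ s := by omega
    have hy : ‖y‖ < ε := by
      have := hmin 1 le_rfl (by omega)
      simpa using this
    have hαε : |α| < ε := by rw [hα]; exact hy
    have hind : ∀ j, j < s → ‖(j • y)‖ = (j:ℝ) * |α| := by
      intro j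
      induction j with
      | zero => intro _; simp
      | succ n ih =>
        intro hlt
        have hn := ih (by omega)
        have hnε : (n:ℝ) * |α| < ε := by
          rcases Nat.eq_zero_or_pos n with rfl | hp
          · simpa using hε
          · rw [← hn]; exact hmin n hp (by omega)
        have hbound : ((n+1 : ℕ):ℝ) * |α| ≤ 1/2 := by push_cast; nlinarith
        have := hrep (n+1) hbound
        push_cast at this ⊢
        exact this
    have hsm1 : ((s-1 : ℕ):ℝ) * |α| < ε := by
      rw [← hind (s-1) (by omega)]
      exact hmin (s-1) (by omega) (by omega)
    have hcast : ((s-1:ℕ):ℝ) = (s:ℝ) - 1 := by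
      push_cast [Nat.cast_sub (by omega : 1 ≤ s)]; ring
    have hsα : ‖s • y‖ = (s:ℝ) * |α| := by
      apply hrep
      have : (s:ℝ) * |α| = ((s-1:ℕ):ℝ) * |α| + |α| := by rw [hcast]; ring
      rw [this]; nlinarith
    have hαlow : ε ≤ (s:ℝ) * |α| := by rw [← hsα]; exact hsnorm
    set m := (s+1)/2 with hm
    have hkey : Finset.Icc m b ⊆ S := by
      intro r hr
      rw [Finset.mem_Icc] at hr
      have h2r : s ≤ 2 * r := by omega
      have hr1 : 1 ≤ r := by omega
      have hral : ε/2 ≤ (r:ℝ) * |α| := by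
        have h2r' : (s:ℝ) ≤ 2 * r := by exact_mod_cast h2r
        have habs : 0 ≤ |α| := abs_nonneg α
        nlinarith
      have hrau : (r:ℝ) * |α| ≤ 1/2 := by
        have hb' : b + 1 ≤ 2 * s := by omega
        have hb'' : (b:ℝ) + 1 ≤ 2 * (s:ℝ) := by exact_mod_cast hb'
        have hble : (b:ℝ) ≤ 2 * ((s:ℝ) - 1) + 1 := by linarith
        have hrb : (r:ℝ) ≤ (b:ℝ) := by exact_mod_cast hr.2
        have habs : 0 ≤ |α| := abs_nonneg α
        have h1 : (r:ℝ) * |α| ≤ (2 * ((s:ℝ)-1) + 1) * |α| := by nlinarith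
        have h2 : ((s:ℝ)-1) * |α| < ε := by rw [← hcast]; exact hsm1
        nlinarith
      have hnorm : ‖r • y‖ = (r:ℝ) * |α| := hrep r hrau
      rw [hS, Finset.mem_filter, Finset.mem_Icc]
      exact ⟨⟨hr1, hr.2⟩, by rw [hnorm]; exact hral⟩
    have hcard : b + 1 - m ≤ S.card := by
      have := Finset.card_le_card hkey
      rwa [Nat.card_Icc] at this
    have hnat : b ≤ 4 * (b + 1 - m) := by omega
    have hfin : (b:ℝ) ≤ 4 * (S.card : ℝ) := by
      have : b ≤ 4 * S.card := by omega
      exact_mod_cast this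
    linarith

end count








section density

lemma ncard_inter_Iio_le {A : Set ℕ} {N₀ : ℕ} (h : A ⊆ Set.Iio N₀) (n : ℕ) :
    (A ∩ Set.Iio n).ncard ≤ N₀ := by
  have h1 : A ∩ Set.Iio n ⊆ Set.Iio N₀ := fun t ht => h ht.1
  have hfin : (Set.Iio N₀ : Set ℕ).Finite := Set.finite_Iio _
  calc (A ∩ Set.Iio n).ncard ≤ (Set.Iio N₀ : Set ℕ).ncard := Set.ncard_le_ncard h1 hfin
    _ = N₀ := by rw [← Finset.coe_range, Set.ncard_coe_finset, Finset.card_range]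

lemma hasDensity_zero_of_bounded {A : Set ℕ} {N₀ : ℕ} (h : A ⊆ Set.Iio N₀) :
    HasDensity A 0 := by
  apply squeeze_zero (g := fun n : ℕ => (N₀ : ℝ) / n)
  · intro n; positivity
  · intro n
    rcases Nat.eq_zero_or_pos n with rfl | hp
    · simp
    · have hle : ((A ∩ Set.Iio n).ncard : ℝ) ≤ N₀ := by exact_mod_cast ncard_inter_Iio_le h n
      have hn' : (0:ℝ) < n := by exact_mod_cast hp
      exact (div_le_div_iff_of_pos_right hn').mpr hle
  · exact tendsto_const_div_atTop_nhds_zero_nat (N₀ : ℝ)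

lemma charSub_subset (u : ℕ → ℤ) : charSub u ⊆ statChar u := by
  intro x hx ε hε
  have hev : ∀ᶠ n in atTop, ‖u n • x‖ < ε :=
    NormedAddCommGroup.tendsto_nhds_zero.mp hx ε hε
  obtain ⟨N₀, hN₀⟩ := eventually_atTop.mp hev
  apply hasDensity_zero_of_bounded (N₀ := N₀)
  intro n hn
  rw [Set.mem_setOf_eq] at hn
  rw [Set.mem_Iio]
  by_contra hc
  push_neg at hc
  exact absurd (hN₀ n hc) (not_lt.mpr hn)

lemma exists_eps (u : ℕ → ℤ) (x : AddCircle (1:ℝ)) (hx : x ∉ charSub u) :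
    ∃ ε : ℝ, 0 < ε ∧ ε ≤ 1/8 ∧ {n : ℕ | ε ≤ ‖u n • x‖}.Infinite := by
  rw [charSub, Set.mem_setOf_eq, NormedAddCommGroup.tendsto_nhds_zero] at hx
  push_neg at hx
  obtain ⟨ε₀, hε₀, hfreq⟩ := hx
  refine ⟨min ε₀ (1/8), by positivity, min_le_right _ _, ?_⟩
  apply Set.infinite_of_forall_exists_gt
  intro m
  obtain ⟨n, hn, hge⟩ := (frequently_atTop'.mp hfreq) m
  exact ⟨n, le_trans (min_le_left _ _) hge, hn⟩

end density


/-- if `(a n)` is strongly non dli then `t^s_{(d n)}(𝕋) = t_{(d n)}(𝕋)`. -/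
theorem statChar_eq_charSub_of_stronglyNonDli (a : ℕ → ℕ) (ha : IsArithSeq a)
    (h : StronglyNonDli a) :
    statChar (fun n => (dSeq a n : ℤ)) = charSub (fun n => (dSeq a n : ℤ)) := by
  apply Set.Subset.antisymm _ (charSub_subset _)
  intro x hx
  by_contra hxc
  obtain ⟨ε, hε, hε8, hInf⟩ := exists_eps _ x hxc
  have hde : dSeq a = eSeq a := dSeq_eq_eSeq ha
  have hnorm : ∀ n : ℕ, ‖((dSeq a n : ℤ) • x)‖ = ‖(eSeq a n • x)‖ := by
    intro n; rw [hde, natCast_zsmul]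
  set Bad : Set ℕ := {n : ℕ | ε/2 ≤ ‖((dSeq a n : ℤ) • x)‖} with hBadDef
  have hBad : HasDensity Bad 0 := hx (ε/2) (by positivity)
  set K : Set ℕ := {k : ℕ | ∃ n ∈ Set.Icc (nseq a k) (nseq a (k+1) - 1),
    ε ≤ ‖((dSeq a n : ℤ) • x)‖} with hKdef
  -- every bad index ≥ 1 lies in a block
  have hKinf : K.Infinite := by
    by_contra hfin
    rw [Set.not_infinite] at hfin
    obtain ⟨M, hM⟩ := hfin.bddAbove
    apply hInf
    apply Set.Finite.subset (Set.finite_Iio (nseq a (M+1)))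
    intro n hn
    rw [Set.mem_setOf_eq] at hn
    rw [Set.mem_Iio]
    rcases Nat.eq_zero_or_pos n with rfl | hp
    · have := nseq_ge ha (M+1); omega
    · have h1 := K_le ha (n-1)
      have h2 := K_lt ha (n-1)
      set k := Kfun a (n-1) with hk
      have hmem : n ∈ Set.Icc (nseq a k) (nseq a (k+1) - 1) := by
        rw [Set.mem_Icc]; omega
      have hkK : k ∈ K := ⟨n, hmem, hn⟩
      have hkM : k ≤ M := hM hkK
      have hmono : nseq a (k+1) ≤ nseq a (M+1) := (nseqSM ha).monotone (by omega)
      rw [Set.mem_Icc] at hmem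
      have hg := nseq_ge ha (k+1)
      omega
  -- per-block counting bound
  have hperblock : ∀ k ∈ K,
      (ratios a (k+1) : ℝ)/4 - 2 ≤ ((Bad ∩ Set.Iio (nseq a (k+1))).ncard : ℝ) := by
    intro k hk
    obtain ⟨n₀, hn₀mem, hn₀⟩ := hk
    obtain ⟨r₀, hr₀2, hr₀b, hn₀eq, hval⟩ := block_val ha hn₀mem
    have hb2 : 2 ≤ ratios a (k+1) := ratios_ge_two ha k
    set b := ratios a (k+1) with hbdef
    set y : AddCircle (1:ℝ) := (a k) • x with hydef
    have hsm : ∀ r : ℕ, (r * a k) • x = r • y := by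
      intro r; rw [mul_comm, mul_nsmul]
    have h3 : ε ≤ ‖(r₀ • y)‖ := by
      rw [← hsm, ← hval, ← hnorm n₀]; exact hn₀
    have hbc := blockCount y hε hε8 hb2 (by omega : 1 ≤ r₀) hr₀b h3
    classical
    set S₁ := (Finset.Icc 1 b).filter (fun r => ε/2 ≤ ‖r • y‖) with hS₁
    set S₂ := (Finset.Icc 2 b).filter (fun r => ε/2 ≤ ‖r • y‖) with hS₂
    have hsub12 : S₁ ⊆ insert 1 S₂ := by
      intro r hr
      rw [hS₁, Finset.mem_filter, Finset.mem_Icc] at hr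
      rcases eq_or_lt_of_le hr.1.1 with heq | hlt
      · exact Finset.mem_insert.mpr (Or.inl heq.symm)
      · exact Finset.mem_insert.mpr (Or.inr (by
          rw [hS₂, Finset.mem_filter, Finset.mem_Icc]; exact ⟨⟨hlt, hr.1.2⟩, hr.2⟩))
    have hcard12 : S₁.card ≤ S₂.card + 1 :=
      (Finset.card_le_card hsub12).trans (Finset.card_insert_le _ _)
    set T := S₂.image (fun r => nseq a k + (r - 2)) with hT
    have hTcard : T.card = S₂.card := by
      apply Finset.card_image_of_injOn
      intro u hu v hv huv
      rw [hS₂, Finset.coe_filter, Set.mem_setOf_eq, Finset.mem_Icc] at hu hv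
      simp only at huv
      omega
    have hTsub : (T : Set ℕ) ⊆ Bad ∩ Set.Iio (nseq a (k+1)) := by
      intro t ht
      rw [hT, Finset.coe_image] at ht
      obtain ⟨r, hr, rfl⟩ := ht
      rw [hS₂, Finset.coe_filter, Set.mem_setOf_eq, Finset.mem_Icc] at hr
      obtain ⟨⟨hr2, hrb⟩, hrn⟩ := hr
      show nseq a k + (r - 2) ∈ Bad ∩ Set.Iio (nseq a (k+1))
      constructor
      · rw [hBadDef, Set.mem_setOf_eq, hnorm, e_block2 ha hr2 hrb, hsm]
        exact hrn
      · rw [Set.mem_Iio, nseq_succ]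
        omega
    have hfin : (Bad ∩ Set.Iio (nseq a (k+1))).Finite :=
      Set.Finite.inter_of_right (Set.finite_Iio _) Bad
    have hle : T.card ≤ (Bad ∩ Set.Iio (nseq a (k+1))).ncard := by
      rw [← Set.ncard_coe_finset]
      exact Set.ncard_le_ncard hTsub hfin
    have hc1 : (S₂.card : ℝ) ≥ (b:ℝ)/4 - 2 := by
      have h12 : (S₁.card : ℝ) ≤ (S₂.card : ℝ) + 1 := by exact_mod_cast hcard12
      linarith
    have hc2 : ((Bad ∩ Set.Iio (nseq a (k+1))).ncard : ℝ) ≥ (S₂.card : ℝ) := by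
      rw [← hTcard]; exact_mod_cast hle
    linarith
  -- the refined infinite sets
  set Q : ℕ → Set ℕ := fun j => {k | k ∈ K ∧
    ((ratios a (k+1) - 1 : ℕ) : ℝ) < (nseq a (k+1) : ℝ)/2^j} with hQdef
  have hQinf : ∀ j : ℕ, (Q j).Infinite := by
    intro j
    have hcomp : Tendsto
        (fun k : ℕ => ((Bad ∩ Set.Iio (nseq a (k+1))).ncard : ℝ) / (nseq a (k+1)))
        atTop (𝓝 0) := by
      have h1 : Tendsto (fun k : ℕ => nseq a (k+1)) atTop atTop := by
        apply tendsto_atTop_mono (f := fun k : ℕ => k + 2)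
        · intro k; have := nseq_ge ha (k+1); omega
        · exact tendsto_add_atTop_nat 2
      exact hBad.comp h1
    have hδ : (0:ℝ) < 1/(4 * 2^(j+1)) := by positivity
    obtain ⟨k₁, hk₁⟩ := (Metric.tendsto_atTop.mp hcomp) _ hδ
    set k₀ := max k₁ (7 * 2^(j+1)) with hk₀
    apply Set.Infinite.mono ?_ (hKinf.diff (Set.finite_Iio k₀))
    intro k hkmem
    obtain ⟨hkK, hknot⟩ := hkmem
    rw [Set.mem_Iio, not_lt] at hknot
    have hpb := hperblock k hkK
    have hdist := hk₁ k (le_trans (le_max_left _ _) hknot)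
    rw [Real.dist_eq, sub_zero] at hdist
    set n' := (nseq a (k+1) : ℝ) with hn'
    have hnpos : (0:ℝ) < n' := by
      rw [hn']
      have := nseq_ge ha (k+1)
      exact_mod_cast by omega
    have habs : |((Bad ∩ Set.Iio (nseq a (k+1))).ncard : ℝ) / n'| =
        ((Bad ∩ Set.Iio (nseq a (k+1))).ncard : ℝ) / n' := by
      apply abs_of_nonneg; positivity
    rw [habs] at hdist
    have hcount : ((Bad ∩ Set.Iio (nseq a (k+1))).ncard : ℝ) < n' / (4 * 2^(j+1)) := by
      have h' := (div_lt_iff₀ hnpos).mp hdist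
      calc ((Bad ∩ Set.Iio (nseq a (k+1))).ncard : ℝ) < 1/(4 * 2^(j+1)) * n' := h'
        _ = n'/(4 * 2^(j+1)) := by ring
    have hb2 : 2 ≤ ratios a (k+1) := ratios_ge_two ha k
    have hnbig : (7:ℝ) * 2^(j+1) ≤ n' := by
      have h1 : 7 * 2^(j+1) ≤ k := le_trans (le_max_right _ _) hknot
      have h2 := nseq_ge ha (k+1)
      rw [hn']
      exact_mod_cast by omega
    show k ∈ K ∧ ((ratios a (k+1) - 1 : ℕ) : ℝ) < (nseq a (k+1) : ℝ)/2^j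
    refine ⟨hkK, ?_⟩
    have hcast : ((ratios a (k+1) - 1 : ℕ) : ℝ) = (ratios a (k+1) : ℝ) - 1 := by
      push_cast [Nat.cast_sub (by omega : 1 ≤ ratios a (k+1))]
      ring
    rw [hcast, ← hn']
    have hsplit : n'/2^j = n'/2^(j+1) + n'/2^(j+1) := by
      rw [pow_succ]; ring
    have h7 : (7:ℝ) ≤ n'/2^(j+1) := by
      rw [le_div_iff₀ (by positivity : (0:ℝ) < 2^(j+1))]
      linarith
    have hquarter : n' / (4 * 2^(j+1)) = (n'/2^(j+1))/4 := by ring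
    rw [hquarter] at hcount
    linarith
  -- recursive construction of a sparse subset
  have hch : ∀ j M : ℕ, ∃ k, k ∈ Q j ∧ M < k := by
    intro j M
    obtain ⟨k, hk, hlt⟩ := (hQinf j).exists_gt M
    exact ⟨k, hk, hlt⟩
  choose F hF1 hF2 using hch
  set g : ℕ → ℕ := fun j => Nat.rec (F 0 0)
    (fun j prev => F (j+1) (max prev (2^(j+1) * (nseq a (prev+1) + 1)))) j with hgdef
  have hgsucc : ∀ j, g (j+1) = F (j+1) (max (g j) (2^(j+1) * (nseq a (g j + 1) + 1))) := by
    intro j; rfl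
  have hgQ : ∀ j, g j ∈ Q j := by
    intro j
    cases j with
    | zero => exact hF1 0 0
    | succ i => rw [hgsucc i]; exact hF1 _ _
  have hgmono : ∀ j, g j < g (j+1) := by
    intro j
    have := hF2 (j+1) (max (g j) (2^(j+1) * (nseq a (g j + 1) + 1)))
    rw [hgsucc j]
    exact lt_of_le_of_lt (le_max_left _ _) this
  have hgSM : StrictMono g := strictMono_nat_of_lt_succ hgmono
  have hgspace : ∀ j, 2^(j+1) * (nseq a (g j + 1) + 1) ≤ nseq a (g (j+1)) := by
    intro j
    have h2 := hF2 (j+1) (max (g j) (2^(j+1) * (nseq a (g j + 1) + 1)))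
    rw [← hgsucc j] at h2
    have := nseq_ge ha (g (j+1))
    have := le_max_right (g j) (2^(j+1) * (nseq a (g j + 1) + 1))
    omega
  set A : Set ℕ := Set.range (fun j => g j + 1) with hAdef
  have hAinf : A.Infinite :=
    Set.infinite_range_of_injective (fun i j hij => hgSM.injective (by omega))
  have hpos := h A hAinf
  -- the lift of A has upper density zero
  have htend : Tendsto (fun N : ℕ => ((liftSet a A ∩ Set.Iio N).ncard : ℝ)/N)
      atTop (𝓝 0) := by
    have hbound : ∀ N : ℕ, nseq a (g 0) < N →
        ((liftSet a A ∩ Set.Iio N).ncard : ℝ) ≤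
          2 * N / 2^(Nat.findGreatest (fun j => nseq a (g j) < N) N) := by
      intro N hN
      set J := Nat.findGreatest (fun j => nseq a (g j) < N) N with hJ
      have hJP : nseq a (g J) < N :=
        Nat.findGreatest_spec (P := fun j => nseq a (g j) < N) (Nat.zero_le N) hN
      have hJmax : ∀ j, J < j → N ≤ nseq a (g j) := by
        intro j hj
        by_cases hjN : j ≤ N
        · have := Nat.findGreatest_is_greatest (P := fun j => nseq a (g j) < N) hj hjN
          omega
        · have h1 := nseq_ge ha (g j)
          have h2 : j ≤ g j := hgSM.le_apply
          omega
      set lo := nseq a (g J) with hlo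
      set C := nseq a (g J + 1) with hCdef
      set hi := min (C - 1) (N - 1) with hhi
      set B1 := if J = 0 then 0 else nseq a (g (J-1) + 1) with hB1
      have hloC : lo < C := nseqSM ha (Nat.lt_succ_self _)
      have hsub : liftSet a A ∩ Set.Iio N ⊆ Set.Iio B1 ∪ Set.Icc lo hi := by
        intro t ht
        obtain ⟨htl, htN⟩ := ht
        rw [Set.mem_Iio] at htN
        rw [liftSet] at htl
        simp only [Set.mem_iUnion, exists_prop] at htl
        obtain ⟨m, hmA, htm⟩ := htl
        rw [hAdef, Set.mem_range] at hmA
        obtain ⟨j, rfl⟩ := hmA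
        simp only [Nat.add_sub_cancel, Set.mem_Icc] at htm
        rcases lt_trichotomy j J with hlt | heq | hgt
        · left
          rw [Set.mem_Iio, hB1, if_neg (by omega : ¬ J = 0)]
          have hmono : nseq a (g j + 1) ≤ nseq a (g (J-1) + 1) :=
            (nseqSM ha).monotone (by
              have := hgSM.monotone (show j ≤ J - 1 by omega); omega)
          have hp : 1 ≤ nseq a (g j + 1) := by have := nseq_ge ha (g j + 1); omega
          omega
        · right
          rw [Set.mem_Icc]
          subst heq
          refine ⟨htm.1, ?_⟩
          have h1 := htm.2
          omega
        · exfalso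
          have h2 := hJmax j hgt
          have h1 : nseq a (g j) ≤ t := htm.1
          omega
      have hfinU : (Set.Iio B1 ∪ Set.Icc lo hi).Finite :=
        (Set.finite_Iio _).union (Set.finite_Icc _ _)
      have hn1 : (liftSet a A ∩ Set.Iio N).ncard ≤ B1 + (hi + 1 - lo) := by
        calc (liftSet a A ∩ Set.Iio N).ncard
            ≤ (Set.Iio B1 ∪ Set.Icc lo hi).ncard := Set.ncard_le_ncard hsub hfinU
          _ ≤ (Set.Iio B1 : Set ℕ).ncard + (Set.Icc lo hi : Set ℕ).ncard :=
              Set.ncard_union_le _ _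
          _ = B1 + (hi + 1 - lo) := by
              rw [← Finset.coe_range, Set.ncard_coe_finset, Finset.card_range,
                ← Finset.coe_Icc, Set.ncard_coe_finset, Nat.card_Icc]
      have hpow : (0:ℝ) < 2^J := by positivity
      have hB1r : (B1:ℝ) ≤ (N:ℝ)/2^J := by
        rcases Nat.eq_zero_or_pos J with hJ0 | hJpos
        · rw [hB1, if_pos hJ0]
          simp only [Nat.cast_zero]
          positivity
        · rw [hB1, if_neg (by omega : ¬ J = 0)]
          have hsp := hgspace (J-1)
          rw [show J - 1 + 1 = J by omega] at hsp
          have h1 : 2^J * nseq a (g (J-1) + 1) ≤ N := by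
            have h2 : 2^J * nseq a (g (J-1) + 1) ≤ 2^J * (nseq a (g (J-1) + 1) + 1) :=
              Nat.mul_le_mul_left _ (by omega)
            omega
          rw [le_div_iff₀ hpow]
          calc (nseq a (g (J-1) + 1) : ℝ) * 2^J
              = ((2^J * nseq a (g (J-1) + 1) : ℕ) : ℝ) := by push_cast; ring
            _ ≤ (N:ℝ) := by exact_mod_cast h1
      obtain ⟨hgK, hQJ⟩ := hgQ J
      rw [← hCdef] at hQJ
      have hCeq : C = lo + (ratios a (g J + 1) - 1) := nseq_succ (g J)
      have hr2 : 2 ≤ ratios a (g J + 1) := ratios_ge_two ha (g J)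
      have hcastl : ((ratios a (g J + 1) - 1 : ℕ) : ℝ) = (C:ℝ) - (lo:ℝ) := by
        rw [hCeq]; push_cast [Nat.cast_sub (by omega : 1 ≤ ratios a (g J + 1))]; ring
      rw [hcastl] at hQJ
      have hpiece : ((hi + 1 - lo : ℕ) : ℝ) ≤ (N:ℝ)/2^J := by
        by_cases hNC : C ≤ N
        · have hhieq : hi = C - 1 := by rw [hhi]; omega
          have hcount : hi + 1 - lo = C - lo := by omega
          rw [hcount]
          have hcast2 : ((C - lo : ℕ) : ℝ) = (C:ℝ) - lo := by
            push_cast [Nat.cast_sub (le_of_lt hloC)]; ring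
          rw [hcast2]
          have hCN : (C:ℝ) ≤ N := by exact_mod_cast hNC
          have hdivle : (C:ℝ)/2^J ≤ (N:ℝ)/2^J := by gcongr
          linarith
        · push_neg at hNC
          have hNpos : 1 ≤ N := by omega
          have hhieq : hi = N - 1 := by rw [hhi]; omega
          have hcount : hi + 1 - lo = N - lo := by omega
          rw [hcount]
          have hcast2 : ((N - lo : ℕ) : ℝ) = (N:ℝ) - lo := by
            push_cast [Nat.cast_sub (le_of_lt hJP)]; ring
          rw [hcast2]
          have hNC' : (N:ℝ) ≤ C := by exact_mod_cast (le_of_lt hNC)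
          have h1p : (1:ℝ) ≤ 2^J := one_le_pow₀ (by norm_num)
          have hsubdiv : ((C:ℝ) - N)/2^J ≤ (C:ℝ) - N :=
            div_le_self (by linarith) h1p
          have hring : ((C:ℝ) - N)/2^J = (C:ℝ)/2^J - (N:ℝ)/2^J := by ring
          linarith
      calc ((liftSet a A ∩ Set.Iio N).ncard : ℝ)
          ≤ ((B1 + (hi + 1 - lo) : ℕ) : ℝ) := by exact_mod_cast hn1
        _ = (B1:ℝ) + ((hi + 1 - lo : ℕ) : ℝ) := by push_cast; ring
        _ ≤ (N:ℝ)/2^J + (N:ℝ)/2^J := by linarith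
        _ = 2 * N / 2^J := by ring
    rw [Metric.tendsto_atTop]
    intro δ hδ
    obtain ⟨J₀, hJ₀⟩ := pow_unbounded_of_one_lt (2/δ) (by norm_num : (1:ℝ) < 2)
    refine ⟨nseq a (g J₀) + 1, fun N hN => ?_⟩
    have hN0 : nseq a (g 0) < N := by
      have := (nseqSM ha).monotone (hgSM.monotone (Nat.zero_le J₀))
      omega
    have hb := hbound N hN0
    set J := Nat.findGreatest (fun j => nseq a (g j) < N) N with hJ
    have hJge : J₀ ≤ J := by
      apply Nat.le_findGreatest
      · have h1 := nseq_ge ha (g J₀)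
        have h2 : J₀ ≤ g J₀ := hgSM.le_apply
        omega
      · omega
    rw [Real.dist_eq, sub_zero]
    have hNpos : (0:ℝ) < N := by
      have : 1 ≤ N := by omega
      exact_mod_cast this
    have habs : |((liftSet a A ∩ Set.Iio N).ncard : ℝ)/N| =
        ((liftSet a A ∩ Set.Iio N).ncard : ℝ)/N := abs_of_nonneg (by positivity)
    rw [habs]
    have hpowJ : (0:ℝ) < 2^J := by positivity
    have hpowJ₀ : (0:ℝ) < 2^J₀ := by positivity
    have hstep1 : ((liftSet a A ∩ Set.Iio N).ncard : ℝ)/N ≤ (2:ℝ)/2^J := by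
      have heq : ((2:ℝ) * N / 2^J)/N = 2/2^J := by
        field_simp
      rw [← heq]
      exact (div_le_div_iff_of_pos_right hNpos).mpr hb
    have hple : (2:ℝ)^J₀ ≤ 2^J := pow_le_pow_right₀ (by norm_num) hJge
    have hstep2 : (2:ℝ)/2^J ≤ 2/2^J₀ :=
      div_le_div_of_nonneg_left (by norm_num) hpowJ₀ hple
    have hstep3 : (2:ℝ)/2^J₀ < δ := by
      rw [div_lt_iff₀ hδ] at hJ₀
      rw [div_lt_iff₀ hpowJ₀]
      linarith
    linarith
  have hlim : upperDensity (liftSet a A) = 0 := htend.limsup_eq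
  rw [hlim] at hpos
  exact lt_irrefl 0 hpos
end
end

section
/- For the arithmetic sequence a_n = 2^{n(n+1)/2}, the statistically characterized subgroup t^s_{(d_n)}(T) is countable. -/
open Filter Topology Set

noncomputable section

/-! ### Auxiliary development -/

namespace StatCharAux

attribute [local instance] Classical.propDecidable

/-- The arithmetic sequence under consideration. -/
def aa : ℕ → ℕ := fun n => 2 ^ (n * (n + 1) / 2)

lemma aa_succ (k : ℕ) : aa (k + 1) = 2 ^ (k + 1) * aa k := by
  have h : (k + 1) * (k + 1 + 1) / 2 = k * (k + 1) / 2 + (k + 1) := by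
    have h2 : (k + 1) * (k + 1 + 1) = k * (k + 1) + 2 * (k + 1) := by ring
    rw [h2, Nat.add_mul_div_left _ _ (by norm_num : 0 < 2)]
  simp only [aa, h, pow_add]
  ring

lemma aa_pos (k : ℕ) : 0 < aa k := Nat.pow_pos (by norm_num)

lemma aa_one_le (k : ℕ) : 1 ≤ aa k := aa_pos k

lemma aa_lt_succ (k : ℕ) : aa k < aa (k + 1) := by
  rw [aa_succ]
  have := aa_pos k
  have h2 : 2 ≤ 2 ^ (k + 1) := Nat.one_lt_two_pow (by omega)
  nlinarith

lemma aa_strictMono : StrictMono aa := strictMono_nat_of_lt_succ aa_lt_succ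

lemma ratios_aa (k : ℕ) : ratios aa (k + 1) = 2 ^ (k + 1) := by
  have h : aa (k + 1) = 2 ^ (k + 1) * aa k := aa_succ k
  simp only [ratios, Nat.add_sub_cancel, h]
  exact Nat.mul_div_cancel _ (aa_pos k)

/-- The predicate enumerated by `dSeq aa`. -/
def P : ℕ → Prop := fun m => ∃ k r : ℕ, 1 ≤ r ∧ r < ratios aa (k + 1) ∧ m = r * aa k

lemma dSeq_aa_eq : dSeq aa = Nat.nth P := rfl

lemma P_iff (m : ℕ) : P m ↔ ∃ k r : ℕ, 1 ≤ r ∧ r < 2 ^ (k + 1) ∧ m = r * aa k := by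
  unfold P
  constructor
  · rintro ⟨k, r, h1, h2, h3⟩; exact ⟨k, r, h1, by rwa [ratios_aa] at h2, h3⟩
  · rintro ⟨k, r, h1, h2, h3⟩; exact ⟨k, r, h1, by rwa [ratios_aa], h3⟩

lemma block_bounds {j r : ℕ} (h1 : 1 ≤ r) (h2 : r < 2 ^ (j + 1)) :
    aa j ≤ r * aa j ∧ r * aa j < aa (j + 1) := by
  constructor
  · exact Nat.le_mul_of_pos_left _ h1
  · rw [aa_succ]
    exact Nat.mul_lt_mul_of_lt_of_le h2 le_rfl (aa_pos j)

lemma block_unique {k j r : ℕ} (h1 : 1 ≤ r) (h2 : r < 2 ^ (j + 1))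
    (ha : aa k ≤ r * aa j) (hb : r * aa j < aa (k + 1)) : j = k := by
  obtain ⟨c1, c2⟩ := block_bounds h1 h2
  by_contra hne
  rcases Nat.lt_or_ge j k with h | h
  · have : aa (j + 1) ≤ aa k := aa_strictMono.monotone (by omega)
    omega
  · have hk : k < j := by omega
    have : aa (k + 1) ≤ aa j := aa_strictMono.monotone (by omega)
    omega

lemma P_mem_Ico {k m : ℕ} (h1 : aa k ≤ m) (h2 : m < aa (k + 1)) (hm : P m) :
    ∃ r : ℕ, 1 ≤ r ∧ r < 2 ^ (k + 1) ∧ m = r * aa k := by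
  obtain ⟨j, r, hr1, hr2, rfl⟩ := (P_iff m).1 hm
  have := block_unique hr1 hr2 h1 h2
  subst this
  exact ⟨r, hr1, hr2, rfl⟩

lemma count_eq_of_no_P {a b : ℕ} (h : a ≤ b) (hno : ∀ m, a ≤ m → m < b → ¬ P m) :
    Nat.count P b = Nat.count P a := by
  induction b, h using Nat.le_induction with
  | base => rfl
  | succ b hb ih =>
    rw [Nat.count_succ, if_neg (hno b hb (by omega)), ih (fun m hm1 hm2 => hno m hm1 (by omega))]
    omega

lemma count_block_step {k r : ℕ} (h1 : 1 ≤ r) (h2 : r + 1 ≤ 2 ^ (k + 1)) :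
    Nat.count P ((r + 1) * aa k) = Nat.count P (r * aa k) + 1 := by
  have hP : P (r * aa k) := (P_iff _).2 ⟨k, r, h1, by omega, rfl⟩
  have hstep : Nat.count P (r * aa k + 1) = Nat.count P (r * aa k) + 1 := by
    rw [Nat.count_succ, if_pos hP]
  have hno : ∀ m, r * aa k + 1 ≤ m → m < (r + 1) * aa k → ¬ P m := by
    intro m hm1 hm2 hPm
    have hak := aa_pos k
    have hlo : aa k ≤ m := le_trans (Nat.le_mul_of_pos_left _ h1) (by omega)
    have hhi : m < aa (k + 1) := by
      have : (r + 1) * aa k ≤ 2 ^ (k + 1) * aa k := Nat.mul_le_mul_right _ h2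
      rw [aa_succ]; omega
    obtain ⟨s, hs1, hs2, rfl⟩ := P_mem_Ico hlo hhi hPm
    have hgt : r < s := by
      by_contra hc
      have : s * aa k ≤ r * aa k := Nat.mul_le_mul_right _ (by omega)
      omega
    have : (r + 1) * aa k ≤ s * aa k := Nat.mul_le_mul_right _ (by omega)
    omega
  have := count_eq_of_no_P (a := r * aa k + 1) (b := (r + 1) * aa k)
    (by have := aa_pos k; nlinarith) hno
  omega

lemma count_block {k r : ℕ} (h1 : 1 ≤ r) (h2 : r ≤ 2 ^ (k + 1)) :
    Nat.count P (r * aa k) = Nat.count P (aa k) + (r - 1) := by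
  induction r with
  | zero => omega
  | succ r ih =>
    rcases Nat.eq_or_lt_of_le h1 with h | h
    · simp [← h]
    · have hr1 : 1 ≤ r := by omega
      rw [count_block_step hr1 h2, ih hr1 (by omega)]
      omega

/-- `cs k` = number of elements of the enumerated set below `aa k`. -/
def cs : ℕ → ℕ := fun k => Nat.count P (aa k)

lemma cs_zero : cs 0 = 0 := by
  have h0 : ¬ P 0 := by
    rintro ⟨k, r, h1, h2, h3⟩
    have := aa_pos k
    nlinarith
  have : aa 0 = 1 := by simp [aa]
  simp [cs, this, Nat.count_succ, h0]

lemma cs_succ (k : ℕ) : cs (k + 1) = cs k + (2 ^ (k + 1) - 1) := by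
  have h := count_block (k := k) (r := 2 ^ (k + 1)) (Nat.one_le_two_pow) le_rfl
  rw [← aa_succ] at h
  exact h

lemma cs_le (k : ℕ) : cs k + 2 ≤ 2 ^ (k + 1) := by
  induction k with
  | zero => simp [cs_zero]
  | succ k ih =>
    rw [cs_succ]
    have : 2 ^ (k + 2) = 2 * 2 ^ (k + 1) := by ring
    omega

lemma le_cs_succ (k : ℕ) : k + 1 ≤ cs (k + 1) := by
  rw [cs_succ]
  have : k + 2 ≤ 2 ^ (k + 1) := (Nat.lt_two_pow_self (n := k + 1))
  omega

lemma le_cs (k : ℕ) : k ≤ cs k := by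
  cases k with
  | zero => simp [cs_zero]
  | succ k => exact le_cs_succ k

lemma cs_pos (k : ℕ) : 0 < cs (k + 1) := lt_of_lt_of_le (by omega) (le_cs_succ k)

lemma dSeq_eq {k r : ℕ} (h1 : 1 ≤ r) (h2 : r < 2 ^ (k + 1)) :
    dSeq aa (cs k + (r - 1)) = r * aa k := by
  have hP : P (r * aa k) := (P_iff _).2 ⟨k, r, h1, h2, rfl⟩
  have h := Nat.nth_count hP
  rw [count_block h1 (le_of_lt h2)] at h
  rw [dSeq_aa_eq]
  exact h

/-! ### Norm facts on the circle -/

lemma norm_coe_of_le_half {v : ℝ} (h : |v| ≤ 1 / 2) : ‖(v : AddCircle (1 : ℝ))‖ = |v| := by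
  rw [AddCircle.norm_coe_eq_abs_iff (p := (1 : ℝ)) one_ne_zero]
  simpa using h

lemma norm_le_half (z : AddCircle (1 : ℝ)) : ‖z‖ ≤ 1 / 2 := by
  have := AddCircle.norm_le_half_period (p := (1 : ℝ)) (x := z) one_ne_zero
  simpa using this

lemma coe_int_eq_zero (n : ℤ) : ((n : ℝ) : AddCircle (1 : ℝ)) = 0 :=
  (AddCircle.coe_eq_zero_iff _).2 ⟨n, by simp⟩

lemma exists_repr (z : AddCircle (1 : ℝ)) :
    ∃ s : ℝ, z = (s : AddCircle (1 : ℝ)) ∧ |s| = ‖z‖ ∧ |s| ≤ 1 / 2 := by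
  induction z using QuotientAddGroup.induction_on with
  | H u =>
    have hco : ((u : ℝ) : AddCircle (1 : ℝ)) = ((u - round u : ℝ) : AddCircle (1 : ℝ)) := by
      rw [AddCircle.coe_sub, coe_int_eq_zero (round u), sub_zero]
    refine ⟨u - round u, hco, ?_, abs_sub_round u⟩
    rw [hco, norm_coe_of_le_half (abs_sub_round u)]

lemma norm_zsmul_eq (z : AddCircle (1 : ℝ)) (r : ℕ) :
    ‖(r : ℤ) • z‖ = ‖((r * ‖z‖ : ℝ) : AddCircle (1 : ℝ))‖ := by
  obtain ⟨s, hz, hs, hs2⟩ := exists_repr z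
  have key : (r : ℤ) • z = (((r : ℝ) * s : ℝ) : AddCircle (1 : ℝ)) := by
    rw [hz, ← AddCircle.coe_zsmul]
    congr 1
    push_cast [zsmul_eq_mul]
    ring
  rw [key, ← hs]
  rcases abs_cases s with ⟨h1, _⟩ | ⟨h1, _⟩
  · rw [h1]
  · rw [h1, show (r : ℝ) * -s = -((r : ℝ) * s) by ring, AddCircle.coe_neg, norm_neg]

lemma norm_nsmul_of_small (z : AddCircle (1 : ℝ)) (n : ℕ) (h : (n : ℝ) * ‖z‖ ≤ 1 / 2) :
    ‖(n : ℤ) • z‖ = (n : ℝ) * ‖z‖ := by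
  have h0 : (0 : ℝ) ≤ (n : ℝ) * ‖z‖ := by positivity
  rw [norm_zsmul_eq, norm_coe_of_le_half (by rwa [abs_of_nonneg h0]), abs_of_nonneg h0]

/-! ### The pigeonhole estimate -/

lemma lemD {z : AddCircle (1 : ℝ)} {N : ℕ} (hN : 8 ≤ N)
    (h : 4 * ((Finset.Ico 1 N).filter
      (fun r : ℕ => (1 : ℝ) / 64 ≤ ‖((r : ℤ)) • z‖)).card < N) :
    (N : ℝ) * ‖z‖ < 1 / 4 := by
  set t := ‖z‖ with ht
  have ht0 : 0 ≤ t := norm_nonneg z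
  set G := (Finset.Ico 1 N).filter
      (fun r : ℕ => ¬ ((1 : ℝ) / 64 ≤ ‖((r : ℤ)) • z‖)) with hG
  have hGcard : ((Finset.Ico 1 N).filter
      (fun r : ℕ => (1 : ℝ) / 64 ≤ ‖((r : ℤ)) • z‖)).card + G.card = N - 1 := by
    rw [hG, Finset.card_filter_add_card_filter_not, Nat.card_Ico]
  set M := N / 2 - 2 with hM
  have key : ∀ j : ℕ, 1 ≤ j → j ≤ M → ∃ r, r ∈ G ∧ r + j ∈ G := by
    intro j hj1 hj2
    set G' := G.image (· + j) with hG'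
    have hcard' : G'.card = G.card := Finset.card_image_of_injective _ (add_left_injective j)
    have hsub : G ∪ G' ⊆ Finset.Ico 1 (N + j) := by
      intro x hx
      rcases Finset.mem_union.1 hx with hx | hx
      · have := Finset.mem_Ico.1 (Finset.mem_filter.1 hx).1
        exact Finset.mem_Ico.2 (by omega)
      · obtain ⟨y, hy, rfl⟩ := Finset.mem_image.1 hx
        have := Finset.mem_Ico.1 (Finset.mem_filter.1 hy).1
        exact Finset.mem_Ico.2 (by omega)
    have hun : (G ∪ G').card ≤ N + j - 1 := by
      have := Finset.card_le_card hsub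
      simpa [Nat.card_Ico] using this
    have hint : 0 < (G ∩ G').card := by
      have h2 := Finset.card_union_add_card_inter G G'
      omega
    obtain ⟨r, hr⟩ := Finset.card_pos.1 hint
    have hr1 := Finset.mem_inter.1 hr
    obtain ⟨y, hy, hyr⟩ := Finset.mem_image.1 hr1.2
    exact ⟨y, hy, by rw [hyr]; exact hr1.1⟩
  have normsmall : ∀ j : ℕ, 1 ≤ j → j ≤ M → ‖(j : ℤ) • z‖ < 1 / 32 := by
    intro j hj1 hj2
    obtain ⟨r, hr, hrj⟩ := key j hj1 hj2
    have h1 : ‖(r : ℤ) • z‖ < 1 / 64 := lt_of_not_ge (Finset.mem_filter.1 hr).2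
    have h2 : ‖((r + j : ℕ) : ℤ) • z‖ < 1 / 64 := lt_of_not_ge (Finset.mem_filter.1 hrj).2
    have heq : (j : ℤ) • z = ((r + j : ℕ) : ℤ) • z - (r : ℤ) • z := by
      rw [← sub_smul]
      congr 1
      push_cast
      ring
    rw [heq]
    calc ‖((r + j : ℕ) : ℤ) • z - (r : ℤ) • z‖ ≤ ‖((r + j : ℕ) : ℤ) • z‖ + ‖(r : ℤ) • z‖ :=
          norm_sub_le _ _
      _ < 1 / 64 + 1 / 64 := by linarith
      _ = 1 / 32 := by norm_num
  have hM2 : 2 ≤ M := by omega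
  have htsmall : t < 1 / 32 := by
    have := normsmall 1 le_rfl (by omega)
    rwa [show ((1 : ℕ) : ℤ) = 1 by norm_num, one_smul] at this
  have mul_bound : ∀ j : ℕ, j ≤ M → (j : ℝ) * t < 1 / 32 := by
    intro j
    induction j with
    | zero => intro _; norm_num
    | succ j ih =>
      intro hj
      have hjM : j ≤ M := by omega
      have ihj := ih hjM
      have hle : ((j : ℝ) + 1) * t ≤ 1 / 2 := by nlinarith
      have hnorm := norm_nsmul_of_small z (j + 1) (by push_cast; linarith)
      have h2 := normsmall (j + 1) (by omega) hj
      rw [hnorm] at h2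
      push_cast at h2 ⊢
      linarith
  have hMt : (M : ℝ) * t < 1 / 32 := mul_bound M le_rfl
  have hNM : N ≤ 8 * M := by omega
  have hNMr : (N : ℝ) ≤ 8 * (M : ℝ) := by exact_mod_cast hNM
  nlinarith

end StatCharAux

/-- for `a n = 2 ^ (n (n+1) / 2)`, the subgroup `t^s_{(d n)}(𝕋)` is countable. -/
theorem statChar_two_pow_countable :
    (statChar (fun n => (dSeq (fun n => 2 ^ (n * (n + 1) / 2)) n : ℤ))).Countable := by
  classical
  have hsub : statChar (fun n => (dSeq (fun n => 2 ^ (n * (n + 1) / 2)) n : ℤ)) ⊆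
      Set.range (fun q : ℚ => ((q : ℝ) : AddCircle (1 : ℝ))) := by
    intro x hx
    open StatCharAux in
    have hden : HasDensity {n : ℕ | (1 : ℝ) / 64 ≤ ‖(dSeq StatCharAux.aa n : ℤ) • x‖} 0 :=
      hx (1 / 64) (by norm_num)
    set A : Set ℕ := {n : ℕ | (1 : ℝ) / 64 ≤ ‖(dSeq StatCharAux.aa n : ℤ) • x‖} with hA
    have hev : ∀ᶠ n : ℕ in atTop, ((A ∩ Set.Iio n).ncard : ℝ) / n < 1 / 8 :=
      hden.eventually (gt_mem_nhds (by norm_num))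
    have htend : Tendsto (fun k : ℕ => StatCharAux.cs (k + 1)) atTop atTop :=
      tendsto_atTop_mono (fun k => le_trans (Nat.le_succ k) (StatCharAux.le_cs_succ k)) tendsto_id
    have hev2 : ∀ᶠ k : ℕ in atTop,
        ((A ∩ Set.Iio (StatCharAux.cs (k + 1))).ncard : ℝ) / (StatCharAux.cs (k + 1)) < 1 / 8 :=
      htend.eventually hev
    have hblock : ∀ᶠ k : ℕ in atTop,
        (2 : ℝ) ^ (k + 1) * ‖(StatCharAux.aa k : ℤ) • x‖ < 1 / 4 := by
      filter_upwards [hev2, eventually_ge_atTop 2] with k hk hk2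
      set z := (StatCharAux.aa k : ℤ) • x with hz
      set N := 2 ^ (k + 1) with hN
      have hN8 : 8 ≤ N := by
        calc (8 : ℕ) = 2 ^ 3 := by norm_num
          _ ≤ 2 ^ (k + 1) := Nat.pow_le_pow_right (by norm_num) (by omega)
      set Bad := (Finset.Ico 1 N).filter
        (fun r : ℕ => (1 : ℝ) / 64 ≤ ‖((r : ℤ)) • z‖) with hBad
      have hmap : ∀ r ∈ Bad, (StatCharAux.cs k + (r - 1)) ∈
          A ∩ Set.Iio (StatCharAux.cs (k + 1)) := by
        intro r hrB
        obtain ⟨hrI, hrn⟩ := Finset.mem_filter.1 hrB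
        obtain ⟨hr1, hr2⟩ := Finset.mem_Ico.1 hrI
        constructor
        · show (1 : ℝ) / 64 ≤ ‖(dSeq StatCharAux.aa (StatCharAux.cs k + (r - 1)) : ℤ) • x‖
          rw [StatCharAux.dSeq_eq hr1 hr2]
          have hss : ((r * StatCharAux.aa k : ℕ) : ℤ) • x = (r : ℤ) • z := by
            rw [hz, smul_smul]
            norm_cast
          rw [hss]
          exact hrn
        · show StatCharAux.cs k + (r - 1) < StatCharAux.cs (k + 1)
          rw [StatCharAux.cs_succ]
          omega
      have hinj : Set.InjOn (fun r : ℕ => StatCharAux.cs k + (r - 1)) (↑Bad : Set ℕ) := by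
        intro r hr s hs hrs
        have h1 := (Finset.mem_Ico.1 (Finset.mem_filter.1 (Finset.mem_coe.1 hr)).1).1
        have h2 := (Finset.mem_Ico.1 (Finset.mem_filter.1 (Finset.mem_coe.1 hs)).1).1
        simp only at hrs
        omega
      have hfin : (A ∩ Set.Iio (StatCharAux.cs (k + 1))).Finite :=
        Set.Finite.subset (Set.finite_Iio _) Set.inter_subset_right
      have hcardle : Bad.card ≤ (A ∩ Set.Iio (StatCharAux.cs (k + 1))).ncard := by
        calc Bad.card = (↑Bad : Set ℕ).ncard := (Set.ncard_coe_finset _).symm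
          _ = ((fun r : ℕ => StatCharAux.cs k + (r - 1)) '' ↑Bad).ncard :=
              (Set.ncard_image_of_injOn hinj).symm
          _ ≤ (A ∩ Set.Iio (StatCharAux.cs (k + 1))).ncard := by
              refine Set.ncard_le_ncard ?_ hfin
              rintro _ ⟨r, hr, rfl⟩
              exact hmap r (Finset.mem_coe.1 hr)
      have hcspos : (0 : ℝ) < (StatCharAux.cs (k + 1) : ℝ) := by
        exact_mod_cast StatCharAux.cs_pos k
      have hnc : ((A ∩ Set.Iio (StatCharAux.cs (k + 1))).ncard : ℝ) <
          (StatCharAux.cs (k + 1) : ℝ) / 8 := by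
        have := (div_lt_iff₀ hcspos).1 hk
        linarith
      have hcsle : (StatCharAux.cs (k + 1) : ℝ) + 2 ≤ (2 : ℝ) ^ (k + 2) := by
        exact_mod_cast StatCharAux.cs_le (k + 1)
      have h4 : 4 * Bad.card < N := by
        have hbr : (Bad.card : ℝ) ≤ ((A ∩ Set.Iio (StatCharAux.cs (k + 1))).ncard : ℝ) := by
          exact_mod_cast hcardle
        have hNr : ((N : ℕ) : ℝ) = (2 : ℝ) ^ (k + 1) := by rw [hN, Nat.cast_pow]; norm_num
        have hpow : (2 : ℝ) ^ (k + 2) = 2 * (2 : ℝ) ^ (k + 1) := by ring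
        have hfin2 : (4 * Bad.card : ℝ) < (N : ℝ) := by
          push_cast
          nlinarith
        exact_mod_cast hfin2
      have hD := StatCharAux.lemD hN8 h4
      have hNr : ((N : ℕ) : ℝ) = (2 : ℝ) ^ (k + 1) := by rw [hN, Nat.cast_pow]; norm_num
      rw [hNr] at hD
      exact hD
    obtain ⟨K, hK⟩ := eventually_atTop.1 hblock
    set δ : ℕ → ℝ := fun k => ‖(StatCharAux.aa k : ℤ) • x‖ with hδ
    have hrec : ∀ k, K ≤ k → δ (k + 1) = 2 ^ (k + 1) * δ k := by
      intro k hk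
      have hsm : ((2 ^ (k + 1) : ℕ) : ℝ) * δ k ≤ 1 / 2 := by
        have := hK k hk
        push_cast
        simp only [hδ] at this ⊢
        linarith
      have heq : ((StatCharAux.aa (k + 1) : ℤ)) • x =
          ((2 ^ (k + 1) : ℕ) : ℤ) • ((StatCharAux.aa k : ℤ) • x) := by
        rw [smul_smul, StatCharAux.aa_succ]
        norm_cast
      calc δ (k + 1) = ‖((2 ^ (k + 1) : ℕ) : ℤ) • ((StatCharAux.aa k : ℤ) • x)‖ := by
            rw [hδ]
            simp only
            rw [heq]
        _ = ((2 ^ (k + 1) : ℕ) : ℝ) * δ k :=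
            StatCharAux.norm_nsmul_of_small _ _ hsm
        _ = 2 ^ (k + 1) * δ k := by push_cast; ring
    have hgrow : ∀ j : ℕ, 2 ^ j * δ K ≤ δ (K + j) := by
      intro j
      induction j with
      | zero => simp
      | succ j ih =>
        rw [show K + (j + 1) = K + j + 1 by omega]
        have h1 : δ (K + j + 1) = 2 ^ (K + j + 1) * δ (K + j) := hrec (K + j) (by omega)
        have h2 : (2 : ℝ) ≤ 2 ^ (K + j + 1) := by
          calc (2 : ℝ) = 2 ^ 1 := by norm_num
            _ ≤ 2 ^ (K + j + 1) := pow_le_pow_right₀ (by norm_num) (by omega)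
        have h3 : 0 ≤ δ (K + j) := norm_nonneg _
        have : 2 ^ (j + 1) * δ K ≤ 2 * δ (K + j) := by
          have : (2 : ℝ) ^ (j + 1) * δ K = 2 * (2 ^ j * δ K) := by ring
          rw [this]
          have h4 : 0 ≤ δ K := norm_nonneg _
          nlinarith
        calc (2 : ℝ) ^ (j + 1) * δ K ≤ 2 * δ (K + j) := this
          _ ≤ 2 ^ (K + j + 1) * δ (K + j) := by nlinarith
          _ = δ (K + j + 1) := h1.symm
    have hδK : δ K = 0 := by
      by_contra hne
      have hpos : 0 < δ K := lt_of_le_of_ne (norm_nonneg _) (Ne.symm hne)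
      obtain ⟨j, hj⟩ := pow_unbounded_of_one_lt ((1 : ℝ) / δ K) (by norm_num : (1:ℝ) < 2)
      have h1 : 1 < 2 ^ j * δ K := by
        rw [div_lt_iff₀ hpos] at hj
        linarith
      have h2 := hgrow j
      have h3 := StatCharAux.norm_le_half ((StatCharAux.aa (K + j) : ℤ) • x)
      simp only [hδ] at h2
      linarith
    have hzero : (StatCharAux.aa K : ℤ) • x = 0 := norm_eq_zero.1 hδK
    obtain ⟨u, rfl⟩ := QuotientAddGroup.mk_surjective x
    have hz0 : (((StatCharAux.aa K : ℝ) * u : ℝ) : AddCircle (1 : ℝ)) = 0 := by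
      rw [show ((StatCharAux.aa K : ℝ) * u) = ((StatCharAux.aa K : ℤ) : ℝ) * u by push_cast; ring,
        ← zsmul_eq_mul, AddCircle.coe_zsmul]
      exact hzero
    obtain ⟨n, hn⟩ := (AddCircle.coe_eq_zero_iff _).1 hz0
    refine ⟨(n : ℚ) / (StatCharAux.aa K : ℚ), ?_⟩
    have haK : ((StatCharAux.aa K : ℕ) : ℝ) ≠ 0 := by
      exact_mod_cast (StatCharAux.aa_pos K).ne'
    have hn' : (n : ℝ) = (StatCharAux.aa K : ℝ) * u := by
      rw [zsmul_eq_mul, mul_one] at hn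
      exact_mod_cast hn
    have hu : u = (n : ℝ) / (StatCharAux.aa K : ℝ) := by
      field_simp [hn']
      linarith [hn']
    show ((((n : ℚ) / (StatCharAux.aa K : ℚ) : ℚ) : ℝ) : AddCircle (1 : ℝ)) =
      QuotientAddGroup.mk u
    rw [show (((n : ℚ) / (StatCharAux.aa K : ℚ) : ℚ) : ℝ) = (n : ℝ) / (StatCharAux.aa K : ℝ)
      by push_cast; ring, ← hu]
  exact Set.Countable.mono hsub (Set.countable_range _)
end
end
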